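/- arXiv:2403.17318 — 4 statements merged into one kernel-verified Lean document; each statement's English description precedes it below -/
import Mathlib

section
/- For a random vector x ~ N(μ, Σ) on ℝⁿ with Σ positive definite, a deterministic symmetric positive definite matrix R with k-th column r, and p₂ ≥ 0, the expectation E[(e_kᵀ R x) exp(−p₂(1 + xᵀ R x))] equals c |S|^{−1/2} exp(−p₂) exp(bᵀS⁻¹b/4) · (rᵀS⁻¹b)/2, where S = (1/2)Σ⁻¹ + p₂R, b = Σ⁻¹μ, and c = 2^{−n/2}|Σ|^{−1/2} exp(−μᵀΣ⁻¹μ/2). -/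
open Matrix MeasureTheory Real


section helpers
variable {n : ℕ}

lemma map_mulVec_volume {M : Matrix (Fin n) (Fin n) ℝ} (hM : M.det ≠ 0) :
    Measure.map (fun y : Fin n → ℝ => M.mulVec y) volume
      = ENNReal.ofReal |M.det|⁻¹ • volume := by
  have := Real.map_matrix_volume_pi_eq_smul_volume_pi hM
  simpa [Matrix.toLin'_apply', Matrix.coe_mulVecLin, abs_inv] using this

lemma integral_comp_mulVec {M : Matrix (Fin n) (Fin n) ℝ} (hM : M.det ≠ 0)
    {g : (Fin n → ℝ) → ℝ} (hg : AEStronglyMeasurable g volume) :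
    ∫ y : Fin n → ℝ, g (M.mulVec y) = |M.det|⁻¹ * ∫ z : Fin n → ℝ, g z := by
  have hmeas : Measurable (fun y : Fin n → ℝ => M.mulVec y) :=
    (Matrix.mulVecLin M).continuous_of_finiteDimensional.measurable
  have hg' : AEStronglyMeasurable g
      (Measure.map (fun y : Fin n → ℝ => M.mulVec y) volume) := by
    rw [map_mulVec_volume hM]
    exact hg.smul_measure _
  calc ∫ y : Fin n → ℝ, g (M.mulVec y)
      = ∫ z, g z ∂(Measure.map (fun y : Fin n → ℝ => M.mulVec y) volume) :=
        (integral_map hmeas.aemeasurable hg').symm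
    _ = |M.det|⁻¹ * ∫ z : Fin n → ℝ, g z := by
        rw [map_mulVec_volume hM, integral_smul_measure,
          ENNReal.toReal_ofReal (by positivity)]
        simp [smul_eq_mul]

lemma integrable_comp_mulVec {M : Matrix (Fin n) (Fin n) ℝ} (hM : M.det ≠ 0)
    {g : (Fin n → ℝ) → ℝ} (hg : Integrable g volume) :
    Integrable (fun y : Fin n → ℝ => g (M.mulVec y)) volume := by
  have hmeas : Measurable (fun y : Fin n → ℝ => M.mulVec y) :=
    (Matrix.mulVecLin M).continuous_of_finiteDimensional.measurable
  have hg' : Integrable g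
      (Measure.map (fun y : Fin n → ℝ => M.mulVec y) volume) := by
    rw [map_mulVec_volume hM]
    exact hg.smul_measure (by simp)
  exact (integrable_map_measure hg'.aestronglyMeasurable hmeas.aemeasurable).mp hg'

end helpers


section gauss
variable {n : ℕ}

lemma integrable_gauss_pi :
    Integrable (fun z : Fin n → ℝ => Real.exp (-∑ i, (z i) ^ 2)) volume := by
  have h1 : Integrable (fun t : ℝ => Real.exp (-t ^ 2)) volume := by
    simpa using integrable_exp_neg_mul_sq (one_pos (α := ℝ))
  have := Integrable.fintype_prod (f := fun (_ : Fin n) (t : ℝ) => Real.exp (-t ^ 2))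
    (fun i => h1)
  convert this using 2 with z
  case e'_5 => rfl
  case e'_7 => exact volume_pi
  rw [← Real.exp_sum]
  simp

lemma integral_gauss_pi :
    ∫ z : Fin n → ℝ, Real.exp (-∑ i, (z i) ^ 2) = Real.pi ^ ((n : ℝ) / 2) := by
  have : ∀ z : Fin n → ℝ, Real.exp (-∑ i, (z i) ^ 2) = ∏ i, Real.exp (-(z i) ^ 2) := by
    intro z; rw [← Real.exp_sum]; simp
  simp_rw [this]
  rw [volume_pi, integral_fintype_prod_eq_pow (ι := Fin n) (fun t : ℝ => Real.exp (-t ^ 2))]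
  have h1 : ∫ t : ℝ, Real.exp (-t ^ 2) = Real.sqrt Real.pi := by
    simpa using integral_gaussian 1
  rw [h1, Fintype.card_fin, Real.sqrt_eq_rpow, ← Real.rpow_natCast (Real.pi ^ ((1:ℝ)/2)) n,
    ← Real.rpow_mul Real.pi_pos.le]
  norm_num
  rw [mul_comm, mul_one_div]

lemma integrable_linear_gauss_pi (w : Fin n → ℝ) :
    Integrable (fun z : Fin n → ℝ => (w ⬝ᵥ z) * Real.exp (-∑ i, (z i) ^ 2)) volume := by
  have key : ∀ i : Fin n, Integrable
      (fun z : Fin n → ℝ => ∏ j, (if j = i then z j else 1) * Real.exp (-(z j) ^ 2)) volume := by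
    intro i
    apply Integrable.fintype_prod (f := fun j (t : ℝ) => (if j = i then t else 1) * Real.exp (-t ^ 2))
    intro j
    by_cases h : j = i
    · simpa [h] using integrable_mul_exp_neg_mul_sq (one_pos (α := ℝ))
    · simpa [h] using integrable_exp_neg_mul_sq (one_pos (α := ℝ))
  have heq : (fun z : Fin n → ℝ => (w ⬝ᵥ z) * Real.exp (-∑ i, (z i) ^ 2))
      = fun z => ∑ i, w i • (∏ j, (if j = i then z j else 1) * Real.exp (-(z j) ^ 2)) := by
    funext z
    rw [dotProduct, Finset.sum_mul]
    congr 1 with i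
    rw [Finset.prod_mul_distrib]
    have h2 : ∏ j, (if j = i then z j else 1) = z i := by
      simp [Finset.prod_ite_eq']
    rw [h2, ← Real.exp_sum]
    simp [smul_eq_mul]
    ring
  rw [heq]
  exact integrable_finset_sum _ (fun i _ => (key i).smul (w i))

end gauss


section matrixalg
variable {n : ℕ}

lemma posDef_smul {M : Matrix (Fin n) (Fin n) ℝ} (hM : M.PosDef) {c : ℝ} (hc : 0 < c) :
    (c • M).PosDef := by
  have ht : Mᵀ = M := by simpa using hM.1.eq
  have hherm : (c • M).IsHermitian := by
    simp [Matrix.IsHermitian, Matrix.conjTranspose_smul, ht]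
  refine Matrix.PosDef.of_dotProduct_mulVec_pos hherm fun x hx => ?_
  have := hM.dotProduct_mulVec_pos hx
  simpa [Matrix.smul_mulVec, dotProduct_smul, smul_eq_mul] using
    mul_pos hc this

lemma posSemidef_smul {M : Matrix (Fin n) (Fin n) ℝ} (hM : M.PosSemidef) {c : ℝ} (hc : 0 ≤ c) :
    (c • M).PosSemidef := by
  have ht : Mᵀ = M := by simpa using hM.1.eq
  have hherm : (c • M).IsHermitian := by
    simp [Matrix.IsHermitian, Matrix.conjTranspose_smul, ht]
  refine Matrix.PosSemidef.of_dotProduct_mulVec_nonneg hherm fun x => ?_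
  have := hM.dotProduct_mulVec_nonneg x
  simpa [Matrix.smul_mulVec, dotProduct_smul, smul_eq_mul] using
    mul_nonneg hc this

-- symmetry: x ⬝ᵥ M y = y ⬝ᵥ M x for symmetric M
lemma dot_mulVec_symm {M : Matrix (Fin n) (Fin n) ℝ} (hM : Mᵀ = M) (x y : Fin n → ℝ) :
    x ⬝ᵥ M.mulVec y = y ⬝ᵥ M.mulVec x := by
  rw [Matrix.dotProduct_mulVec, ← Matrix.mulVec_transpose, hM, dotProduct_comm]

end matrixalg


section core
variable {n : ℕ} {S : Matrix (Fin n) (Fin n) ℝ}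

open scoped MatrixOrder in
lemma sqrt_facts (hS : S.PosDef) :
    ∃ A : Matrix (Fin n) (Fin n) ℝ, Aᵀ = A ∧ A * A = S ∧ A.det ≠ 0 ∧
      |A.det|⁻¹ = S.det ^ (-(1 : ℝ) / 2) := by
  refine ⟨CFC.sqrt S, ?_, CFC.sqrt_mul_sqrt_self S hS.posSemidef.nonneg, ?_, ?_⟩
  · have := (CFC.sqrt_nonneg S).posSemidef.isHermitian.eq
    simpa using this
  · have hdet : (CFC.sqrt S).det * (CFC.sqrt S).det = S.det := by
      rw [← Matrix.det_mul, CFC.sqrt_mul_sqrt_self S hS.posSemidef.nonneg]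
    intro h
    rw [h, mul_zero] at hdet
    exact (hS.det_pos).ne hdet
  · have hdet : (CFC.sqrt S).det ^ 2 = S.det := by
      rw [sq, ← Matrix.det_mul, CFC.sqrt_mul_sqrt_self S hS.posSemidef.nonneg]
    rw [← hdet, ← sq_abs, ← Real.rpow_natCast |(CFC.sqrt S).det| 2,
      ← Real.rpow_mul (abs_nonneg _)]
    have hApos : 0 < |(CFC.sqrt S).det| := by
      rw [abs_pos]
      intro h
      rw [h] at hdet
      simpa [← hdet] using hS.det_pos
    rw [show ((2 : ℕ) : ℝ) * (-(1:ℝ)/2) = -1 by norm_num, Real.rpow_neg_one]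

lemma quad_eq_sum_sq {A : Matrix (Fin n) (Fin n) ℝ} (hAt : Aᵀ = A) (hAA : A * A = S)
    (y : Fin n → ℝ) : y ⬝ᵥ S.mulVec y = ∑ i, (A.mulVec y i) ^ 2 := by
  have : y ⬝ᵥ S.mulVec y = (A.mulVec y) ⬝ᵥ (A.mulVec y) := by
    rw [← hAA, ← Matrix.mulVec_mulVec, Matrix.dotProduct_mulVec, ← Matrix.mulVec_transpose, hAt]
  rw [this, dotProduct]
  congr 1 with i
  ring
end core


section core2
variable {n : ℕ}

-- assume helper lemmas available by 







variable {S : Matrix (Fin n) (Fin n) ℝ}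

theorem integral_exp_neg_quadform (hS : S.PosDef) :
    ∫ y : Fin n → ℝ, Real.exp (-(y ⬝ᵥ S.mulVec y))
      = S.det ^ (-(1 : ℝ) / 2) * Real.pi ^ ((n : ℝ) / 2) := by
  obtain ⟨A, hAt, hAA, hAdet, hAdet2⟩ := sqrt_facts hS
  have hg : AEStronglyMeasurable (fun z : Fin n → ℝ => Real.exp (-∑ i, (z i) ^ 2)) volume :=
    integrable_gauss_pi.aestronglyMeasurable
  have := integral_comp_mulVec hAdet hg
  simp_rw [← quad_eq_sum_sq hAt hAA] at this
  rw [this, integral_gauss_pi, hAdet2]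

theorem integrable_exp_neg_quadform (hS : S.PosDef) :
    Integrable (fun y : Fin n → ℝ => Real.exp (-(y ⬝ᵥ S.mulVec y))) volume := by
  obtain ⟨A, hAt, hAA, hAdet, _⟩ := sqrt_facts hS
  have := integrable_comp_mulVec hAdet (integrable_gauss_pi (n := n))
  simp_rw [← quad_eq_sum_sq hAt hAA] at this
  exact this

theorem integrable_linear_exp_neg_quadform (hS : S.PosDef) (r : Fin n → ℝ) :
    Integrable (fun y : Fin n → ℝ => (r ⬝ᵥ y) * Real.exp (-(y ⬝ᵥ S.mulVec y))) volume := by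
  obtain ⟨A, hAt, hAA, hAdet, _⟩ := sqrt_facts hS
  set w : Fin n → ℝ := (A⁻¹)ᵀ.mulVec r with hw
  have := integrable_comp_mulVec hAdet (integrable_linear_gauss_pi w)
  have heq : (fun y : Fin n → ℝ => (w ⬝ᵥ A.mulVec y) * Real.exp (-∑ i, (A.mulVec y i) ^ 2))
      = fun y : Fin n → ℝ => (r ⬝ᵥ y) * Real.exp (-(y ⬝ᵥ S.mulVec y)) := by
    funext y
    rw [← quad_eq_sum_sq hAt hAA]
    have hdot : w ⬝ᵥ A.mulVec y = r ⬝ᵥ y := by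
      rw [hw, Matrix.mulVec_transpose, ← Matrix.dotProduct_mulVec, Matrix.mulVec_mulVec,
        Matrix.nonsing_inv_mul A (isUnit_iff_ne_zero.mpr hAdet), Matrix.one_mulVec]
    rw [hdot]
  rw [← heq]
  exact this

theorem integral_odd_quadform (hS : S.PosDef) (r : Fin n → ℝ) :
    ∫ y : Fin n → ℝ, (r ⬝ᵥ y) * Real.exp (-(y ⬝ᵥ S.mulVec y)) = 0 := by
  have h := integral_neg_eq_self (fun y : Fin n → ℝ => (r ⬝ᵥ y) * Real.exp (-(y ⬝ᵥ S.mulVec y)))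
    (volume : Measure (Fin n → ℝ))
  simp only [dotProduct_neg, Matrix.mulVec_neg, neg_dotProduct, neg_neg,
    neg_mul] at h
  have : ∫ y : Fin n → ℝ, (r ⬝ᵥ y) * Real.exp (-(y ⬝ᵥ S.mulVec y)) =
      - ∫ y : Fin n → ℝ, (r ⬝ᵥ y) * Real.exp (-(y ⬝ᵥ S.mulVec y)) := by
    rw [← integral_neg]
    exact h.symm
  linarith
end core2



/-- Density of the multivariate normal distribution `N(μ, Σ)` on `ℝⁿ`. -/
noncomputable def gaussDensity {n : ℕ} (μv : Fin n → ℝ)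
    (Sig : Matrix (Fin n) (Fin n) ℝ) (x : Fin n → ℝ) : ℝ :=
  (2 * Real.pi) ^ (-(n : ℝ) / 2) * Sig.det ^ (-(1 : ℝ) / 2) *
    Real.exp (-((x - μv) ⬝ᵥ (Sig⁻¹).mulVec (x - μv)) / 2)

/-- First conditional MGF derivative identity:
`E[(e_kᵀ R x) exp(−p₂(1 + xᵀRx))] = c |S|^{−1/2} e^{−p₂} e^{bᵀS⁻¹b/4} (rᵀS⁻¹b)/2`
for `x ~ N(μ, Σ)`, `S = (1/2)Σ⁻¹ + p₂R`, `b = Σ⁻¹μ`,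
`c = 2^{−n/2}|Σ|^{−1/2} exp(−μᵀΣ⁻¹μ/2)`, `r` the `k`-th column of `R`. -/
theorem gaussian_expectation_first {n : ℕ} (μv : Fin n → ℝ)
    (Sig R : Matrix (Fin n) (Fin n) ℝ) (hSig : Sig.PosDef) (hR : R.PosDef)
    (hRsymm : Rᵀ = R) (k : Fin n) (p₂ : ℝ) (hp₂ : 0 ≤ p₂)
    (S : Matrix (Fin n) (Fin n) ℝ) (hS : S = (1 / 2 : ℝ) • Sig⁻¹ + p₂ • R)
    (b : Fin n → ℝ) (hb : b = (Sig⁻¹).mulVec μv)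
    (r : Fin n → ℝ) (hr : r = fun i => R i k)
    (c : ℝ) (hc : c = (2 : ℝ) ^ (-(n : ℝ) / 2) * Sig.det ^ (-(1 : ℝ) / 2) *
      Real.exp (-(μv ⬝ᵥ (Sig⁻¹).mulVec μv) / 2)) :
    ∫ x : Fin n → ℝ,
        (Pi.single k 1 ⬝ᵥ R.mulVec x) * Real.exp (-p₂ * (1 + x ⬝ᵥ R.mulVec x)) *
          gaussDensity μv Sig x =
      c * S.det ^ (-(1 : ℝ) / 2) * Real.exp (-p₂) *
        Real.exp ((b ⬝ᵥ (S⁻¹).mulVec b) / 4) * ((r ⬝ᵥ (S⁻¹).mulVec b) / 2) := by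
  -- basic matrix facts
  have hSpos : S.PosDef := by
    rw [hS]
    exact (posDef_smul hSig.inv (by norm_num)).add_posSemidef
      (posSemidef_smul hR.posSemidef hp₂)
  have hSt : Sᵀ = S := by simpa using hSpos.isHermitian.eq
  have hSinvt : (S⁻¹)ᵀ = S⁻¹ := by simpa using hSpos.inv.isHermitian.eq
  have hSiginvt : (Sig⁻¹)ᵀ = Sig⁻¹ := by simpa using hSig.inv.isHermitian.eq
  have hSdet : IsUnit S.det := isUnit_iff_ne_zero.mpr hSpos.det_pos.ne'
  set m : Fin n → ℝ := (1 / 2 : ℝ) • (S⁻¹).mulVec b with hm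
  have hSm : S.mulVec m = (1 / 2 : ℝ) • b := by
    rw [hm, Matrix.mulVec_smul, Matrix.mulVec_mulVec, Matrix.mul_nonsing_inv S hSdet,
      Matrix.one_mulVec]
  -- completing the square
  have e3 : ∀ x : Fin n → ℝ, x ⬝ᵥ S.mulVec x
      = (1 / 2 : ℝ) * (x ⬝ᵥ (Sig⁻¹).mulVec x) + p₂ * (x ⬝ᵥ R.mulVec x) := by
    intro x
    rw [hS, Matrix.add_mulVec, dotProduct_add, Matrix.smul_mulVec,
      Matrix.smul_mulVec, dotProduct_smul, dotProduct_smul]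
    simp [smul_eq_mul]
  have e1 : ∀ x : Fin n → ℝ, (x - μv) ⬝ᵥ (Sig⁻¹).mulVec (x - μv)
      = x ⬝ᵥ (Sig⁻¹).mulVec x - 2 * (b ⬝ᵥ x) + μv ⬝ᵥ (Sig⁻¹).mulVec μv := by
    intro x
    have h1 : x ⬝ᵥ (Sig⁻¹).mulVec μv = b ⬝ᵥ x := by
      rw [← hb, dotProduct_comm]
    have h2 : μv ⬝ᵥ (Sig⁻¹).mulVec x = b ⬝ᵥ x := by
      rw [dot_mulVec_symm hSiginvt, h1]
    rw [Matrix.mulVec_sub, sub_dotProduct, dotProduct_sub,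
      dotProduct_sub, h1, h2]
    ring
  have e2 : ∀ x : Fin n → ℝ, (x - m) ⬝ᵥ S.mulVec (x - m)
      = x ⬝ᵥ S.mulVec x - b ⬝ᵥ x + (b ⬝ᵥ (S⁻¹).mulVec b) / 4 := by
    intro x
    have h1 : x ⬝ᵥ S.mulVec m = (1 / 2 : ℝ) * (b ⬝ᵥ x) := by
      rw [hSm, dotProduct_smul, smul_eq_mul, dotProduct_comm]
    have h2 : m ⬝ᵥ S.mulVec x = (1 / 2 : ℝ) * (b ⬝ᵥ x) := by
      rw [dot_mulVec_symm hSt, h1]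
    have h3 : m ⬝ᵥ S.mulVec m = (b ⬝ᵥ (S⁻¹).mulVec b) / 4 := by
      rw [hSm, dotProduct_smul, smul_eq_mul, hm, smul_dotProduct, smul_eq_mul,
        dotProduct_comm]
      ring
    rw [Matrix.mulVec_sub, sub_dotProduct, dotProduct_sub,
      dotProduct_sub, h1, h2, h3]
    ring
  have key : ∀ x : Fin n → ℝ,
      -p₂ * (1 + x ⬝ᵥ R.mulVec x) + (-((x - μv) ⬝ᵥ (Sig⁻¹).mulVec (x - μv)) / 2)
      = (-p₂ + (b ⬝ᵥ (S⁻¹).mulVec b) / 4 + -(μv ⬝ᵥ (Sig⁻¹).mulVec μv) / 2)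
        + -((x - m) ⬝ᵥ S.mulVec (x - m)) := by
    intro x
    rw [e1, e2, e3]
    ring
  -- the linear factor
  have hsingle : ∀ x : Fin n → ℝ, Pi.single k 1 ⬝ᵥ R.mulVec x = r ⬝ᵥ x := by
    intro x
    have hRe : ∀ i j, R i j = R j i := fun i j => by
      conv_lhs => rw [← hRsymm, Matrix.transpose_apply]
    rw [show Pi.single k (1:ℝ) ⬝ᵥ R *ᵥ x = (R *ᵥ x) k from by simp, hr]
    simp only [Matrix.mulVec, dotProduct]
    exact Finset.sum_congr rfl fun j _ => by rw [hRe k j]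
  -- rewrite the integrand
  set C : ℝ := (2 * Real.pi) ^ (-(n : ℝ) / 2) * Sig.det ^ (-(1 : ℝ) / 2) *
    Real.exp (-p₂ + (b ⬝ᵥ (S⁻¹).mulVec b) / 4 + -(μv ⬝ᵥ (Sig⁻¹).mulVec μv) / 2) with hC
  have hintegrand : ∀ x : Fin n → ℝ,
      (Pi.single k 1 ⬝ᵥ R.mulVec x) * Real.exp (-p₂ * (1 + x ⬝ᵥ R.mulVec x)) *
        gaussDensity μv Sig x
      = C * ((r ⬝ᵥ x) * Real.exp (-((x - m) ⬝ᵥ S.mulVec (x - m)))) := by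
    intro x
    rw [hsingle, gaussDensity, hC]
    rw [show (-((x - μv) ⬝ᵥ (Sig⁻¹).mulVec (x - μv)) / 2)
      = -((x - μv) ⬝ᵥ (Sig⁻¹).mulVec (x - μv)) / 2 from rfl]
    have := key x
    have hexp : Real.exp (-p₂ * (1 + x ⬝ᵥ R.mulVec x)) *
        Real.exp (-((x - μv) ⬝ᵥ (Sig⁻¹).mulVec (x - μv)) / 2)
        = Real.exp (-p₂ + (b ⬝ᵥ (S⁻¹).mulVec b) / 4 + -(μv ⬝ᵥ (Sig⁻¹).mulVec μv) / 2) *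
          Real.exp (-((x - m) ⬝ᵥ S.mulVec (x - m))) := by
      rw [← Real.exp_add, ← Real.exp_add, this]
    linear_combination ((2 * Real.pi) ^ (-(n : ℝ) / 2) * Sig.det ^ (-(1 : ℝ) / 2) *
      (r ⬝ᵥ x)) * hexp
  rw [show (fun x : Fin n → ℝ =>
      (Pi.single k 1 ⬝ᵥ R.mulVec x) * Real.exp (-p₂ * (1 + x ⬝ᵥ R.mulVec x)) *
        gaussDensity μv Sig x)
    = fun x : Fin n → ℝ => C * ((r ⬝ᵥ x) * Real.exp (-((x - m) ⬝ᵥ S.mulVec (x - m))))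
    from funext hintegrand, MeasureTheory.integral_const_mul]
  have htrans : ∫ x : Fin n → ℝ, (r ⬝ᵥ x) * Real.exp (-((x - m) ⬝ᵥ S.mulVec (x - m)))
      = ∫ y : Fin n → ℝ, (r ⬝ᵥ (y + m)) * Real.exp (-(y ⬝ᵥ S.mulVec y)) := by
    rw [← integral_add_right_eq_self
      (fun x : Fin n → ℝ => (r ⬝ᵥ x) * Real.exp (-((x - m) ⬝ᵥ S.mulVec (x - m)))) m]
    congr 1 with y
    simp
  rw [htrans]
  have hsplit : (fun y : Fin n → ℝ => (r ⬝ᵥ (y + m)) * Real.exp (-(y ⬝ᵥ S.mulVec y)))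
      = fun y : Fin n → ℝ => (r ⬝ᵥ y) * Real.exp (-(y ⬝ᵥ S.mulVec y))
          + (r ⬝ᵥ m) * Real.exp (-(y ⬝ᵥ S.mulVec y)) := by
    funext y
    rw [dotProduct_add, add_mul]
  rw [hsplit, integral_add (integrable_linear_exp_neg_quadform hSpos r)
    ((integrable_exp_neg_quadform hSpos).const_mul (r ⬝ᵥ m)),
    integral_odd_quadform hSpos r, MeasureTheory.integral_const_mul, integral_exp_neg_quadform hSpos,
    zero_add]
  have hrm : r ⬝ᵥ m = (r ⬝ᵥ (S⁻¹).mulVec b) / 2 := by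
    rw [hm, dotProduct_smul, smul_eq_mul]
    ring
  have h2pi : ((2 : ℝ) * Real.pi) ^ (-(n : ℝ) / 2)
      = (2 : ℝ) ^ (-(n : ℝ) / 2) * Real.pi ^ (-(n : ℝ) / 2) :=
    Real.mul_rpow (by norm_num) Real.pi_pos.le
  have hpipi : Real.pi ^ (-(n : ℝ) / 2) * Real.pi ^ ((n : ℝ) / 2) = 1 := by
    rw [← Real.rpow_add Real.pi_pos, neg_div, neg_add_cancel, Real.rpow_zero]
  rw [hC, hrm, hc, h2pi, Real.exp_add, Real.exp_add]
  linear_combination ((2 : ℝ) ^ (-(n : ℝ) / 2) * Sig.det ^ (-(1 : ℝ) / 2) *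
    Real.exp (-p₂) * Real.exp ((b ⬝ᵥ (S⁻¹).mulVec b) / 4) *
    Real.exp (-(μv ⬝ᵥ (Sig⁻¹).mulVec μv) / 2) * ((r ⬝ᵥ (S⁻¹).mulVec b) / 2) *
    S.det ^ (-(1 : ℝ) / 2)) * hpipi
end

section
/- For x ~ N(μ, Σ) with Σ positive definite, R symmetric positive definite with k-th column r, and p₂ ≥ 0, E[(e_kᵀ R x)² exp(−p₂(1 + xᵀ R x))] = c |S|^{−1/2} exp(−p₂) exp(bᵀS⁻¹b/4) · ( rᵀS⁻¹r/2 + (rᵀS⁻¹b)²/4 ), with S = (1/2)Σ⁻¹ + p₂R, b = Σ⁻¹μ, c = 2^{−n/2}|Σ|^{−1/2} exp(−μᵀΣ⁻¹μ/2). -/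
open Matrix MeasureTheory Real

section Helpers
open Set Finset


lemma int_exp : ∫ x : ℝ, Real.exp (-x^2) = Real.sqrt π := by
  simpa using integral_gaussian 1

lemma integrable_exp_sq : Integrable (fun x : ℝ => Real.exp (-x^2)) := by
  simpa using integrable_exp_neg_mul_sq (one_pos)

lemma integrable_mul_exp_sq : Integrable (fun x : ℝ => x * Real.exp (-x^2)) := by
  simpa using integrable_mul_exp_neg_mul_sq (one_pos)

lemma integrable_sq_mul_exp_sq : Integrable (fun x : ℝ => x^2 * Real.exp (-x^2)) := by
  have h : Integrable (fun x : ℝ => 2 * Real.exp (-(1/2) * x^2)) :=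
    (integrable_exp_neg_mul_sq (by norm_num)).const_mul 2
  refine h.mono' ?_ ?_
  · exact (continuous_pow 2).mul ((continuous_pow 2).neg.rexp) |>.aestronglyMeasurable
  · filter_upwards with x
    rw [Real.norm_eq_abs, abs_of_nonneg (by positivity)]
    have h1 : x^2/2 ≤ Real.exp (x^2/2) := (Real.add_one_le_exp _).trans' (by linarith)
    have : x^2 ≤ 2 * Real.exp (x^2/2) := by linarith
    calc x^2 * Real.exp (-x^2) ≤ 2 * Real.exp (x^2/2) * Real.exp (-x^2) := by
          exact mul_le_mul_of_nonneg_right this (Real.exp_nonneg _)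
      _ = 2 * Real.exp (-(1/2) * x^2) := by
          rw [mul_assoc, ← Real.exp_add]; ring_nf

lemma int_mul_exp : ∫ x : ℝ, x * Real.exp (-x^2) = 0 := by
  have h : ∫ x : ℝ, -x * Real.exp (-(-x)^2) = ∫ x : ℝ, x * Real.exp (-x^2) :=
    integral_neg_eq_self (fun x : ℝ => x * Real.exp (-x^2)) volume
  simp only [neg_mul, neg_neg, neg_sq, integral_neg] at h
  linarith

lemma int_sq_mul_exp : ∫ x : ℝ, x^2 * Real.exp (-x^2) = Real.sqrt π / 2 := by
  have hIoi : ∫ x in Ioi (0:ℝ), x^2 * Real.exp (-x^2) = Real.sqrt π / 4 := by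
    have h := integral_rpow_mul_exp_neg_rpow (p := 2) (q := 2) (by norm_num) (by norm_num)
    rw [setIntegral_congr_fun measurableSet_Ioi
      (fun x hx => by
        norm_num [show ((2:ℝ)) = ((2:ℕ):ℝ) by norm_num, Real.rpow_natCast] : EqOn (fun x : ℝ => x ^ (2:ℝ) * Real.exp (-x ^ (2:ℝ)))
          (fun x : ℝ => x^2 * Real.exp (-x^2)) (Ioi 0))] at h
    rw [h]
    have : ((2:ℝ) + 1) / 2 = 1/2 + 1 := by norm_num
    rw [this, Real.Gamma_add_one (by norm_num), Real.Gamma_one_half_eq]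
    ring
  have hIic : ∫ x in Iic (0:ℝ), x^2 * Real.exp (-x^2) = Real.sqrt π / 4 := by
    have h := integral_comp_neg_Iic 0 (fun x => x^2 * Real.exp (-x^2))
    simp only [neg_sq, neg_neg] at h
    rw [h, neg_zero, hIoi]
  rw [← intervalIntegral.integral_Iic_add_Ioi integrable_sq_mul_exp_sq.integrableOn
    integrable_sq_mul_exp_sq.integrableOn, hIic, hIoi]
  ring

variable {n : ℕ}

lemma G_eq (y : Fin n → ℝ) : Real.exp (-(y ⬝ᵥ y)) = ∏ l, Real.exp (-(y l)^2) := by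
  rw [← Real.exp_sum]
  congr 1
  rw [dotProduct, ← Finset.sum_neg_distrib]
  exact Finset.sum_congr rfl fun l _ => by ring_nf

lemma integrable_G : Integrable (fun y : Fin n → ℝ => Real.exp (-(y ⬝ᵥ y))) := by
  have : (fun y : Fin n → ℝ => Real.exp (-(y ⬝ᵥ y)))
      = fun y => ∏ l, (fun t : ℝ => Real.exp (-t^2)) (y l) := funext fun y => G_eq y
  rw [this]
  exact Integrable.fintype_prod (fun _ => integrable_exp_sq)

lemma int_G : ∫ y : Fin n → ℝ, Real.exp (-(y ⬝ᵥ y)) = (Real.sqrt π)^n := by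
  simp_rw [G_eq]
  rw [MeasureTheory.integral_fintype_prod_volume_eq_pow (ι := Fin n) (fun t : ℝ => Real.exp (-t^2)), int_exp]
  simp

lemma coord_rep (i : Fin n) (y : Fin n → ℝ) :
    y i * Real.exp (-(y ⬝ᵥ y)) = ∏ l, ((if l = i then y l else 1) * Real.exp (-(y l)^2)) := by
  rw [Finset.prod_mul_distrib, Finset.prod_ite_eq' Finset.univ i (fun l => y l)]
  simp [← G_eq]

lemma integrable_coord (i : Fin n) :
    Integrable (fun y : Fin n → ℝ => y i * Real.exp (-(y ⬝ᵥ y))) := by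
  have : (fun y : Fin n → ℝ => y i * Real.exp (-(y ⬝ᵥ y)))
      = fun y => ∏ l, (fun t : ℝ => (if l = i then t else 1) * Real.exp (-t^2)) (y l) := by
    funext y; simpa using coord_rep i y
  rw [this]
  refine Integrable.fintype_prod (f := fun l (t : ℝ) => (if l = i then t else 1) * Real.exp (-t^2))
    fun l => ?_
  by_cases h : l = i <;> simp [h, integrable_mul_exp_sq, integrable_exp_sq]

lemma int_coord (i : Fin n) : ∫ y : Fin n → ℝ, y i * Real.exp (-(y ⬝ᵥ y)) = 0 := by
  have : (fun y : Fin n → ℝ => y i * Real.exp (-(y ⬝ᵥ y)))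
      = fun y => ∏ l, (fun t : ℝ => (if l = i then t else 1) * Real.exp (-t^2)) (y l) := by
    funext y; simpa using coord_rep i y
  rw [this, MeasureTheory.integral_fintype_prod_volume_eq_prod (ι := Fin n)
    (fun l (t : ℝ) => (if l = i then t else 1) * Real.exp (-t^2))]
  refine Finset.prod_eq_zero (Finset.mem_univ i) ?_
  simp [int_mul_exp]

lemma coord2_rep (i j : Fin n) (y : Fin n → ℝ) :
    y i * y j * Real.exp (-(y ⬝ᵥ y)) =
      ∏ l, ((if l = i then y l else 1) * (if l = j then y l else 1) * Real.exp (-(y l)^2)) := by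
  simp_rw [Finset.prod_mul_distrib]
  rw [Finset.prod_ite_eq' Finset.univ i (fun l => y l),
    Finset.prod_ite_eq' Finset.univ j (fun l => y l)]
  simp [← G_eq]

lemma integrable_coord2 (i j : Fin n) :
    Integrable (fun y : Fin n → ℝ => y i * y j * Real.exp (-(y ⬝ᵥ y))) := by
  have : (fun y : Fin n → ℝ => y i * y j * Real.exp (-(y ⬝ᵥ y)))
      = fun y => ∏ l, (fun t : ℝ =>
          (if l = i then t else 1) * (if l = j then t else 1) * Real.exp (-t^2)) (y l) := by
    funext y; simpa using coord2_rep i j y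
  rw [this]
  refine Integrable.fintype_prod
    (f := fun l (t : ℝ) => (if l = i then t else 1) * (if l = j then t else 1) * Real.exp (-t^2))
    fun l => ?_
  rcases eq_or_ne l i with rfl | h1
  · rcases eq_or_ne l j with rfl | h2
    · simpa [← sq] using integrable_sq_mul_exp_sq
    · simpa [h2] using integrable_mul_exp_sq
  · rcases eq_or_ne l j with rfl | h2
    · simpa [h1] using integrable_mul_exp_sq
    · simpa [h1, h2] using integrable_exp_sq

lemma int_coord2 (i j : Fin n) :
    ∫ y : Fin n → ℝ, y i * y j * Real.exp (-(y ⬝ᵥ y)) =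
      if i = j then (Real.sqrt π)^n / 2 else 0 := by
  have : (fun y : Fin n → ℝ => y i * y j * Real.exp (-(y ⬝ᵥ y)))
      = fun y => ∏ l, (fun t : ℝ =>
          (if l = i then t else 1) * (if l = j then t else 1) * Real.exp (-t^2)) (y l) := by
    funext y; simpa using coord2_rep i j y
  rw [this, MeasureTheory.integral_fintype_prod_volume_eq_prod (ι := Fin n)
    (fun l (t : ℝ) => (if l = i then t else 1) * (if l = j then t else 1) * Real.exp (-t^2))]
  by_cases hij : i = j
  · subst hij
    have heach : ∀ l : Fin n, (∫ t : ℝ,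
        (if l = i then t else 1) * (if l = i then t else 1) * Real.exp (-t^2))
        = Real.sqrt π * (if l = i then (1:ℝ)/2 else 1) := by
      intro l
      by_cases h : l = i
      · simp only [h, if_pos rfl]
        simp [← sq, int_sq_mul_exp]; ring
      · simp [h, int_exp]
    simp_rw [heach]
    rw [Finset.prod_mul_distrib, Finset.prod_const, Finset.prod_ite_eq' Finset.univ i
      (fun _ => (1:ℝ)/2)]
    simp [Finset.card_univ]; ring
  · rw [if_neg hij]
    refine Finset.prod_eq_zero (Finset.mem_univ i) ?_
    simp only [if_pos rfl, if_neg hij]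
    simpa using int_mul_exp

lemma int_quad (v : Fin n → ℝ) (t : ℝ) :
    ∫ y : Fin n → ℝ, (v ⬝ᵥ y + t)^2 * Real.exp (-(y ⬝ᵥ y)) =
      (Real.sqrt π)^n * ((v ⬝ᵥ v)/2 + t^2) := by
  have hrep : ∀ y : Fin n → ℝ, (v ⬝ᵥ y + t)^2 * Real.exp (-(y ⬝ᵥ y)) =
      (∑ i, ∑ j, v i * v j * (y i * y j * Real.exp (-(y ⬝ᵥ y)))) +
      ((∑ i, (2*t*v i) * (y i * Real.exp (-(y ⬝ᵥ y)))) + t^2 * Real.exp (-(y ⬝ᵥ y))) := by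
    intro y
    have h1 : (v ⬝ᵥ y)^2 = ∑ i, ∑ j, v i * v j * (y i * y j) := by
      rw [dotProduct, sq, Finset.sum_mul_sum]
      exact Finset.sum_congr rfl fun i _ => Finset.sum_congr rfl fun j _ => by ring
    have h2 : (v ⬝ᵥ y + t)^2 = (v ⬝ᵥ y)^2 + 2*t*(v ⬝ᵥ y) + t^2 := by ring
    rw [h2, h1, dotProduct, add_mul, add_mul, add_assoc]
    congr 1
    · rw [Finset.sum_mul]
      refine Finset.sum_congr rfl fun i _ => ?_
      rw [Finset.sum_mul]
      exact Finset.sum_congr rfl fun j _ => by ring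
    · congr 1
      rw [Finset.mul_sum, Finset.sum_mul]
      exact Finset.sum_congr rfl fun i _ => by ring
  simp_rw [hrep]
  have hint2 : Integrable (fun y : Fin n → ℝ =>
      ∑ i, ∑ j, v i * v j * (y i * y j * Real.exp (-(y ⬝ᵥ y)))) :=
    integrable_finset_sum _ fun i _ => integrable_finset_sum _ fun j _ =>
      (integrable_coord2 i j).const_mul _
  have hint1 : Integrable (fun y : Fin n → ℝ =>
      ∑ i, (2*t*v i) * (y i * Real.exp (-(y ⬝ᵥ y)))) :=
    integrable_finset_sum _ fun i _ => (integrable_coord i).const_mul _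
  have hint0 : Integrable (fun y : Fin n → ℝ => t^2 * Real.exp (-(y ⬝ᵥ y))) :=
    integrable_G.const_mul _
  have hintg : Integrable (fun y : Fin n → ℝ =>
      (∑ i, (2*t*v i) * (y i * Real.exp (-(y ⬝ᵥ y)))) + t^2 * Real.exp (-(y ⬝ᵥ y))) :=
    hint1.add hint0
  rw [integral_add hint2 hintg, integral_add hint1 hint0]
  rw [integral_finset_sum _ fun i _ => integrable_finset_sum _ fun j _ =>
      (integrable_coord2 i j).const_mul _]
  rw [integral_finset_sum _ fun i _ => (integrable_coord i).const_mul _]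
  simp_rw [integral_finset_sum _ fun j _ => (integrable_coord2 _ j).const_mul _,
    integral_const_mul, int_coord, int_coord2, int_G, mul_zero,
    Finset.sum_const_zero, mul_ite, mul_zero, Finset.sum_ite_eq Finset.univ,
    Finset.mem_univ, if_true]
  simp only [zero_add, dotProduct]
  rw [← Finset.sum_mul]
  ring

variable {n : ℕ}

lemma continuous_dot_right (a : Fin n → ℝ) : Continuous fun x : Fin n → ℝ => a ⬝ᵥ x := by
  simp only [dotProduct]
  exact continuous_finset_sum _ fun i _ => continuous_const.mul (continuous_apply i)

lemma continuous_quadForm (S : Matrix (Fin n) (Fin n) ℝ) :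
    Continuous fun x : Fin n → ℝ => x ⬝ᵥ S.mulVec x := by
  simp only [dotProduct, mulVec]
  exact continuous_finset_sum _ fun i _ => (continuous_apply i).mul
    (continuous_finset_sum _ fun j _ => continuous_const.mul (continuous_apply j))

/-- Change of variables by an invertible affine map. -/
lemma integral_comp_affine (M : Matrix (Fin n) (Fin n) ℝ) (hM : M.det ≠ 0)
    (m : Fin n → ℝ) (f : (Fin n → ℝ) → ℝ) (hf : Continuous f) :
    ∫ x : Fin n → ℝ, f x = |M.det| * ∫ y : Fin n → ℝ, f (M.mulVec y + m) := by
  have hlin : Continuous fun y : Fin n → ℝ => M.mulVec y :=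
    continuous_const.matrix_mulVec continuous_id
  have h1 : ∫ y : Fin n → ℝ, f (M.mulVec y + m)
      = ∫ z, f (z + m) ∂(Measure.map (Matrix.toLin' M) volume) := by
    rw [integral_map]
    · rfl
    · exact hlin.aemeasurable
    · exact (hf.comp (continuous_id.add continuous_const)).aestronglyMeasurable
  rw [h1, Real.map_matrix_volume_pi_eq_smul_volume_pi hM, integral_smul_measure,
    ENNReal.toReal_ofReal (by positivity), integral_add_right_eq_self (fun z => f z) m,
    smul_eq_mul, ← mul_assoc]
  rw [abs_inv, mul_inv_cancel₀ (by simpa using hM), one_mul]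

lemma dot_mulVec_left (M : Matrix (Fin n) (Fin n) ℝ) (u w : Fin n → ℝ) :
    (M.mulVec u) ⬝ᵥ w = u ⬝ᵥ (Mᵀ.mulVec w) := by
  rw [Matrix.dotProduct_mulVec, Matrix.vecMul_transpose]

open scoped MatrixOrder in
lemma gauss_quad_int (S : Matrix (Fin n) (Fin n) ℝ) (hS : S.PosDef) (hSsymm : Sᵀ = S)
    (b r : Fin n → ℝ) :
    ∫ x : Fin n → ℝ, (r ⬝ᵥ x)^2 * Real.exp (-(x ⬝ᵥ S.mulVec x) + b ⬝ᵥ x) =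
      (Real.sqrt π)^n * (Real.sqrt S.det)⁻¹ * Real.exp ((b ⬝ᵥ (S⁻¹).mulVec b)/4) *
        ((r ⬝ᵥ (S⁻¹).mulVec r)/2 + (r ⬝ᵥ (S⁻¹).mulVec b)^2/4) := by
  have hSdet : 0 < S.det := hS.det_pos
  set Q := CFC.sqrt S with hQdef
  have hQQ : Q * Q = S := CFC.sqrt_mul_sqrt_self S hS.posSemidef.nonneg
  have hQsymm : Qᵀ = Q := by
    have := (CFC.sqrt_nonneg S).posSemidef.isHermitian
    exact (by simpa using this : Q.IsSymm).eq
  have hQdet2 : Q.det * Q.det = S.det := by rw [← det_mul, hQQ]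
  have hQdet_nonneg : 0 ≤ Q.det := by
    have hherm := (CFC.sqrt_nonneg S).posSemidef.isHermitian
    rw [hherm.det_eq_prod_eigenvalues]
    refine Finset.prod_nonneg fun i _ => ?_
    simpa using (CFC.sqrt_nonneg S).posSemidef.eigenvalues_nonneg i
  have hQdet_pos : 0 < Q.det := by
    rcases hQdet_nonneg.lt_or_eq with h | h
    · exact h
    · exfalso; rw [← h] at hQdet2; simp at hQdet2; linarith [hQdet2 ▸ hSdet]
  have hQdet_ne : Q.det ≠ 0 := ne_of_gt hQdet_pos
  have hQsqrt : Q.det = Real.sqrt S.det := by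
    rw [← hQdet2, Real.sqrt_mul_self hQdet_nonneg]
  have hSSinv : S * S⁻¹ = 1 := mul_nonsing_inv S (isUnit_iff_ne_zero.2 (ne_of_gt hSdet))
  have hQinvQ : Q⁻¹ * Q = 1 := nonsing_inv_mul Q (isUnit_iff_ne_zero.2 hQdet_ne)
  have hQQinv : Q * Q⁻¹ = 1 := mul_nonsing_inv Q (isUnit_iff_ne_zero.2 hQdet_ne)
  set A := Q⁻¹ with hAdef
  have hAsymm : Aᵀ = A := by rw [hAdef, Matrix.transpose_nonsing_inv, hQsymm]
  have hAA : A * A = S⁻¹ := by rw [hAdef, ← Matrix.mul_inv_rev, hQQ]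
  have hSA : S * A = Q := by rw [hAdef, ← hQQ, mul_assoc, hQQinv, mul_one]
  have hASA : A * (S * A) = 1 := by rw [hSA, hAdef, hQinvQ]
  set m : Fin n → ℝ := (1/2 : ℝ) • (S⁻¹).mulVec b with hmdef
  have hSm : S.mulVec m = (1/2 : ℝ) • b := by
    rw [hmdef, Matrix.mulVec_smul, Matrix.mulVec_mulVec, hSSinv, Matrix.one_mulVec]
  set f : (Fin n → ℝ) → ℝ :=
    fun x => (r ⬝ᵥ x)^2 * Real.exp (-(x ⬝ᵥ S.mulVec x) + b ⬝ᵥ x) with hfdef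
  have hfc : Continuous f :=
    ((continuous_dot_right r).pow 2).mul
      (Real.continuous_exp.comp ((continuous_quadForm S).neg.add (continuous_dot_right b)))
  have hAdet : A.det = (Q.det)⁻¹ := by rw [hAdef, Matrix.det_nonsing_inv, Ring.inverse_eq_inv]
  have hAdet_ne : A.det ≠ 0 := by rw [hAdet]; exact inv_ne_zero hQdet_ne
  have habs : |A.det| = (Real.sqrt S.det)⁻¹ := by
    rw [hAdet, abs_inv, abs_of_pos hQdet_pos, hQsqrt]
  have hpt : ∀ y : Fin n → ℝ, f (A.mulVec y + m) =
      Real.exp ((b ⬝ᵥ (S⁻¹).mulVec b)/4) *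
        (((A.mulVec r) ⬝ᵥ y + (r ⬝ᵥ (S⁻¹).mulVec b)/2)^2 * Real.exp (-(y ⬝ᵥ y))) := by
    intro y
    set z := A.mulVec y with hzdef
    have hz1 : z ⬝ᵥ S.mulVec z = y ⬝ᵥ y := by
      rw [hzdef, dot_mulVec_left, hAsymm, Matrix.mulVec_mulVec, Matrix.mulVec_mulVec,
        mul_assoc, hASA, Matrix.one_mulVec]
    have hz2 : z ⬝ᵥ S.mulVec m = (b ⬝ᵥ z)/2 := by
      rw [hSm, dotProduct_smul, smul_eq_mul, dotProduct_comm]; ring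
    have hz3 : m ⬝ᵥ S.mulVec z = (b ⬝ᵥ z)/2 := by
      have := dot_mulVec_left S m z
      rw [hSsymm] at this
      rw [← this, hSm, smul_dotProduct, smul_eq_mul]; ring
    have hmb : m ⬝ᵥ b = (b ⬝ᵥ (S⁻¹).mulVec b)/2 := by
      rw [hmdef, smul_dotProduct, smul_eq_mul, dotProduct_comm]; ring
    have hz4 : m ⬝ᵥ S.mulVec m = (b ⬝ᵥ (S⁻¹).mulVec b)/4 := by
      rw [hSm, dotProduct_smul, smul_eq_mul, hmb]; ring
    have hz5 : b ⬝ᵥ m = (b ⬝ᵥ (S⁻¹).mulVec b)/2 := by rw [dotProduct_comm]; exact hmb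
    have hz6 : r ⬝ᵥ z = (A.mulVec r) ⬝ᵥ y := by
      rw [dot_mulVec_left, hAsymm, hzdef]
    have hz7 : r ⬝ᵥ m = (r ⬝ᵥ (S⁻¹).mulVec b)/2 := by
      rw [hmdef, dotProduct_smul, smul_eq_mul]; ring
    rw [hfdef]
    simp only [Matrix.mulVec_add, dotProduct_add, add_dotProduct]
    rw [hz1, hz2, hz3, hz4, hz5, hz6, hz7]
    rw [← hz6]
    rw [hz6]
    have hexp : -(y ⬝ᵥ y + (b ⬝ᵥ z)/2 + ((b ⬝ᵥ z)/2 + (b ⬝ᵥ (S⁻¹).mulVec b)/4)) +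
        (b ⬝ᵥ z + (b ⬝ᵥ (S⁻¹).mulVec b)/2) =
        (b ⬝ᵥ (S⁻¹).mulVec b)/4 + -(y ⬝ᵥ y) := by ring
    rw [hexp, Real.exp_add]
    ring
  rw [integral_comp_affine A hAdet_ne m f hfc, habs]
  simp_rw [hpt]
  rw [MeasureTheory.integral_const_mul, int_quad (A.mulVec r) ((r ⬝ᵥ (S⁻¹).mulVec b)/2)]
  have hvv : (A.mulVec r) ⬝ᵥ (A.mulVec r) = r ⬝ᵥ (S⁻¹).mulVec r := by
    rw [dot_mulVec_left, hAsymm, Matrix.mulVec_mulVec, hAA]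
  rw [hvv]
  ring

end Helpers

/-- Second conditional MGF derivative identity:
`E[(e_kᵀRx)² exp(−p₂(1 + xᵀRx))]
  = c |S|^{−1/2} e^{−p₂} e^{bᵀS⁻¹b/4} (rᵀS⁻¹r/2 + (rᵀS⁻¹b)²/4)`. -/
theorem gaussian_expectation_second {n : ℕ} (μv : Fin n → ℝ)
    (Sig R : Matrix (Fin n) (Fin n) ℝ) (hSig : Sig.PosDef) (hR : R.PosDef)
    (hRsymm : Rᵀ = R) (k : Fin n) (p₂ : ℝ) (hp₂ : 0 ≤ p₂)
    (S : Matrix (Fin n) (Fin n) ℝ) (hS : S = (1 / 2 : ℝ) • Sig⁻¹ + p₂ • R)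
    (b : Fin n → ℝ) (hb : b = (Sig⁻¹).mulVec μv)
    (r : Fin n → ℝ) (hr : r = fun i => R i k)
    (c : ℝ) (hc : c = (2 : ℝ) ^ (-(n : ℝ) / 2) * Sig.det ^ (-(1 : ℝ) / 2) *
      Real.exp (-(μv ⬝ᵥ (Sig⁻¹).mulVec μv) / 2)) :
    ∫ x : Fin n → ℝ,
        (Pi.single k 1 ⬝ᵥ R.mulVec x) ^ 2 * Real.exp (-p₂ * (1 + x ⬝ᵥ R.mulVec x)) *
          gaussDensity μv Sig x =
      c * S.det ^ (-(1 : ℝ) / 2) * Real.exp (-p₂) *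
        Real.exp ((b ⬝ᵥ (S⁻¹).mulVec b) / 4) *
        ((r ⬝ᵥ (S⁻¹).mulVec r) / 2 + (r ⬝ᵥ (S⁻¹).mulVec b) ^ 2 / 4) := by
  have hSigdet : 0 < Sig.det := hSig.det_pos
  have hSigsymm : Sigᵀ = Sig := by
    have := hSig.isHermitian
    rwa [Matrix.IsHermitian, Matrix.conjTranspose_eq_transpose_of_trivial] at this
  have hSiginv_symm : (Sig⁻¹)ᵀ = Sig⁻¹ := by rw [Matrix.transpose_nonsing_inv, hSigsymm]
  have hSiginv_pd : (Sig⁻¹).PosDef := hSig.inv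
  have hSsymm : Sᵀ = S := by
    rw [hS, Matrix.transpose_add, Matrix.transpose_smul, Matrix.transpose_smul,
      hSiginv_symm, hRsymm]
  have hSpd : S.PosDef := by
    refine Matrix.PosDef.of_dotProduct_mulVec_pos ?_ fun x hx => ?_
    · rw [Matrix.IsHermitian, Matrix.conjTranspose_eq_transpose_of_trivial, hSsymm]
    · have h1 : 0 < star x ⬝ᵥ (Sig⁻¹ *ᵥ x) := hSiginv_pd.dotProduct_mulVec_pos hx
      have h2 : 0 ≤ star x ⬝ᵥ (R *ᵥ x) := hR.posSemidef.dotProduct_mulVec_nonneg x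
      rw [hS, Matrix.add_mulVec, dotProduct_add, Matrix.smul_mulVec,
        Matrix.smul_mulVec, dotProduct_smul, dotProduct_smul, smul_eq_mul, smul_eq_mul]
      nlinarith [mul_nonneg hp₂ h2]
  have hSdet : 0 < S.det := hSpd.det_pos
  have hek : ∀ x : Fin n → ℝ, Pi.single k 1 ⬝ᵥ R.mulVec x = r ⬝ᵥ x := by
    intro x
    have h1 : Pi.single k 1 ⬝ᵥ R.mulVec x = (R.mulVec x) k := by
      simp [dotProduct, Pi.single_apply]
    rw [h1, hr, Matrix.mulVec, dotProduct, dotProduct]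
    refine Finset.sum_congr rfl fun j _ => ?_
    have h2 : R j k = R k j := (Matrix.transpose_apply R k j).symm.trans (by rw [hRsymm])
    rw [h2]
  have hμx : ∀ x : Fin n → ℝ, μv ⬝ᵥ (Sig⁻¹).mulVec x = x ⬝ᵥ (Sig⁻¹).mulVec μv := by
    intro x
    have h1 := dot_mulVec_left (Sig⁻¹) μv x
    rw [hSiginv_symm] at h1
    rw [← h1, dotProduct_comm]
  have hbx : ∀ x : Fin n → ℝ, b ⬝ᵥ x = x ⬝ᵥ (Sig⁻¹).mulVec μv := by
    intro x; rw [hb, dotProduct_comm]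
  have combine : ∀ (q K u v c0 E : ℝ), u + v = c0 + E →
      q * Real.exp u * (K * Real.exp v) = K * Real.exp c0 * (q * Real.exp E) := by
    intro q K u v c0 E h
    have h1 : Real.exp u * Real.exp v = Real.exp c0 * Real.exp E := by
      rw [← Real.exp_add, ← Real.exp_add, h]
    linear_combination q * K * h1
  have hpt : ∀ x : Fin n → ℝ,
      (Pi.single k 1 ⬝ᵥ R.mulVec x) ^ 2 * Real.exp (-p₂ * (1 + x ⬝ᵥ R.mulVec x)) *
          gaussDensity μv Sig x =
      (2 * Real.pi) ^ (-(n : ℝ) / 2) * Sig.det ^ (-(1 : ℝ) / 2) *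
          Real.exp (-p₂ + -(μv ⬝ᵥ (Sig⁻¹).mulVec μv) / 2) *
        ((r ⬝ᵥ x)^2 * Real.exp (-(x ⬝ᵥ S.mulVec x) + b ⬝ᵥ x)) := by
    intro x
    have e1 : (x - μv) ⬝ᵥ (Sig⁻¹).mulVec (x - μv) =
        x ⬝ᵥ (Sig⁻¹).mulVec x - 2 * (x ⬝ᵥ (Sig⁻¹).mulVec μv) + μv ⬝ᵥ (Sig⁻¹).mulVec μv := by
      rw [Matrix.mulVec_sub, dotProduct_sub, sub_dotProduct, sub_dotProduct, hμx x]; ring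
    have e2 : x ⬝ᵥ S.mulVec x =
        (x ⬝ᵥ (Sig⁻¹).mulVec x)/2 + p₂ * (x ⬝ᵥ R.mulVec x) := by
      rw [hS, Matrix.add_mulVec, dotProduct_add, Matrix.smul_mulVec,
        Matrix.smul_mulVec, dotProduct_smul, dotProduct_smul, smul_eq_mul, smul_eq_mul]
      ring
    rw [hek x]
    show (r ⬝ᵥ x)^2 * Real.exp (-p₂ * (1 + x ⬝ᵥ R.mulVec x)) *
        ((2 * Real.pi) ^ (-(n : ℝ) / 2) * Sig.det ^ (-(1 : ℝ) / 2) *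
          Real.exp (-((x - μv) ⬝ᵥ (Sig⁻¹).mulVec (x - μv)) / 2)) = _
    refine combine _ ((2 * Real.pi) ^ (-(n : ℝ) / 2) * Sig.det ^ (-(1 : ℝ) / 2)) _ _ _ _ ?_
    rw [e1, e2, hbx x]
    ring
  simp_rw [hpt]
  rw [MeasureTheory.integral_const_mul, gauss_quad_int S hSpd hSsymm b r]
  -- now pure constant algebra
  have hpow : (2 * Real.pi) ^ (-(n : ℝ) / 2) * (Real.sqrt π)^n = (2:ℝ) ^ (-(n : ℝ) / 2) := by
    rw [Real.mul_rpow (by norm_num) (le_of_lt Real.pi_pos)]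
    have h2 : (Real.sqrt π)^n = π ^ ((n:ℝ) / 2) := by
      rw [Real.sqrt_eq_rpow, ← Real.rpow_natCast (π ^ ((1:ℝ)/2)) n,
        ← Real.rpow_mul (le_of_lt Real.pi_pos)]
      rw [show (1/2:ℝ) * (n:ℝ) = (n:ℝ)/2 by ring]
    rw [mul_assoc, h2, ← Real.rpow_add Real.pi_pos,
      show -(n:ℝ)/2 + (n:ℝ)/2 = 0 by ring, Real.rpow_zero, mul_one]
  have hsdet : (Real.sqrt S.det)⁻¹ = S.det ^ (-(1:ℝ)/2) := by
    rw [Real.sqrt_eq_rpow, ← Real.rpow_neg (le_of_lt hSdet)]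
    norm_num
  have hexp2 : Real.exp (-p₂ + -(μv ⬝ᵥ (Sig⁻¹).mulVec μv) / 2) =
      Real.exp (-(μv ⬝ᵥ (Sig⁻¹).mulVec μv) / 2) * Real.exp (-p₂) := by
    rw [← Real.exp_add]
    try congr 1
    try ring
  rw [hc, hexp2, ← hpow, ← hsdet]
  ring
end

section
/- First moment of the ratio: for x ~ N(μ, Σ) with Σ positive definite and R symmetric positive definite with k-th column r, E[ (e_kᵀ R x)/(1 + xᵀ R x) ] = c ∫₀^∞ |S|^{−1/2} exp(−p₂) exp(bᵀS⁻¹b/4) (rᵀS⁻¹b)/2 dp₂, where S = (1/2)Σ⁻¹ + p₂R, b = Σ⁻¹μ, c = 2^{−n/2}|Σ|^{−1/2} exp(−μᵀΣ⁻¹μ/2). -/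
open Matrix MeasureTheory Real

section FMRaux

variable {n : ℕ}

private lemma fmr_cont_dot (a : Fin n → ℝ) : Continuous fun y : Fin n → ℝ => a ⬝ᵥ y := by
  simp only [dotProduct]
  exact continuous_finset_sum _ (fun i _ => (continuous_const.mul (continuous_apply i)))

private lemma fmr_cont_self_dot : Continuous fun y : Fin n → ℝ => y ⬝ᵥ y := by
  simp only [dotProduct]
  exact continuous_finset_sum _ (fun i _ => ((continuous_apply i).mul (continuous_apply i)))

private lemma fmr_cont_mulVec (A : Matrix (Fin n) (Fin n) ℝ) :
    Continuous fun y : Fin n → ℝ => A.mulVec y := by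
  refine continuous_pi (fun i => ?_)
  simpa [Matrix.mulVec, dotProduct] using fmr_cont_dot (A i)

private lemma fmr_cont_quad (A : Matrix (Fin n) (Fin n) ℝ) :
    Continuous fun y : Fin n → ℝ => y ⬝ᵥ A.mulVec y := by
  simp only [dotProduct]
  refine continuous_finset_sum _ (fun i _ => ((continuous_apply i).mul ?_))
  exact (continuous_apply i).comp (fmr_cont_mulVec A)

private lemma fmr_gauss1d (a : ℝ) :
    ∫ y : ℝ, Real.exp (-y^2 + a*y) = Real.sqrt π * Real.exp (a^2/4) := by
  have h : ∀ y : ℝ, -y^2 + a*y = -((y - a/2)^2) + a^2/4 := by intro y; ring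
  simp_rw [h, Real.exp_add, integral_mul_const]
  rw [integral_sub_right_eq_self (fun y => Real.exp (-(y^2))) (a/2)]
  have := integral_gaussian 1
  simp only [one_mul, div_one, neg_mul] at this
  rw [this]

private lemma fmr_gauss1d_integrable (a : ℝ) :
    Integrable (fun y : ℝ => Real.exp (-y^2 + a*y)) := by
  have h : ∀ y : ℝ, -y^2 + a*y = -((y - a/2)^2) + a^2/4 := by intro y; ring
  simp_rw [h, Real.exp_add]
  apply Integrable.mul_const
  have : Integrable (fun y : ℝ => Real.exp (-(1:ℝ)*y^2)) := integrable_exp_neg_mul_sq one_pos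
  simp only [neg_mul, one_mul] at this
  exact (this.comp_sub_right (a/2))

private lemma fmr_prod_form (c x : Fin n → ℝ) :
    Real.exp (-(x ⬝ᵥ x) + c ⬝ᵥ x) = ∏ i, Real.exp (-(x i)^2 + c i * (x i)) := by
  rw [← Real.exp_sum]
  congr 1
  simp [dotProduct, Finset.sum_add_distrib, ← Finset.sum_neg_distrib, sq]

private lemma fmr_gauss_diag (c : Fin n → ℝ) :
    ∫ x : Fin n → ℝ, Real.exp (-(x ⬝ᵥ x) + c ⬝ᵥ x)
      = (Real.sqrt π)^n * Real.exp ((c ⬝ᵥ c)/4) := by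
  simp_rw [fmr_prod_form]
  rw [integral_fintype_prod_volume_eq_prod (f := fun i (y : ℝ) => Real.exp (-y^2 + c i * y))]
  simp_rw [fmr_gauss1d]
  rw [Finset.prod_mul_distrib, Finset.prod_const, ← Real.exp_sum, Finset.card_univ,
    Fintype.card_fin]
  congr 1
  rw [dotProduct, Finset.sum_div]
  apply congrArg; exact Finset.sum_congr rfl (fun i _ => by ring)

private lemma fmr_gauss_diag_integrable (c : Fin n → ℝ) :
    Integrable (fun x : Fin n → ℝ => Real.exp (-(x ⬝ᵥ x) + c ⬝ᵥ x)) := by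
  simp_rw [fmr_prod_form]
  exact Integrable.fintype_prod (f := fun i (y : ℝ) => Real.exp (-y^2 + c i * y))
    (fun i => fmr_gauss1d_integrable (c i))

private lemma fmr_map_mulVec_volume (M : Matrix (Fin n) (Fin n) ℝ) (hM : M.det ≠ 0) :
    Measure.map (M.mulVec) (volume : Measure (Fin n → ℝ)) =
      ENNReal.ofReal |M.det|⁻¹ • volume := by
  have h1 : LinearMap.det (Matrix.toLin' M) = M.det := LinearMap.det_toLin' M
  have := Measure.map_linearMap_addHaar_pi_eq_smul_addHaar (f := Matrix.toLin' M)
    (by rw [h1]; exact hM) (volume : Measure (Fin n → ℝ))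
  have h2 : ⇑(Matrix.toLin' M) = M.mulVec := by ext x; simp [Matrix.toLin'_apply]
  rw [h2, h1] at this
  rw [this, abs_inv]

private lemma fmr_integral_comp_mulVec (M : Matrix (Fin n) (Fin n) ℝ) (hM : M.det ≠ 0)
    (f : (Fin n → ℝ) → ℝ) (hf : AEStronglyMeasurable f (volume : Measure (Fin n → ℝ))) :
    ∫ x : Fin n → ℝ, f (M.mulVec x) = |M.det|⁻¹ * ∫ y : Fin n → ℝ, f y := by
  have hmeas : Measurable (M.mulVec) := (fmr_cont_mulVec M).measurable
  have hmap := fmr_map_mulVec_volume M hM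
  have hf' : AEStronglyMeasurable f (Measure.map (M.mulVec) volume) := by
    rw [hmap]; exact hf.smul_measure _
  rw [← integral_map hmeas.aemeasurable hf', hmap, integral_smul_measure,
    ENNReal.toReal_ofReal (by positivity), smul_eq_mul]

private lemma fmr_integrable_comp_mulVec {M : Matrix (Fin n) (Fin n) ℝ} (hM : M.det ≠ 0)
    {f : (Fin n → ℝ) → ℝ} (hf : Integrable f (volume : Measure (Fin n → ℝ))) :
    Integrable (fun x => f (M.mulVec x)) (volume : Measure (Fin n → ℝ)) := by
  have hmeas : Measurable (M.mulVec) := (fmr_cont_mulVec M).measurable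
  have hmap := fmr_map_mulVec_volume M hM
  have : Integrable f (Measure.map (M.mulVec) volume) := by
    rw [hmap]
    exact hf.smul_measure (by simp)
  exact (integrable_map_measure this.aestronglyMeasurable hmeas.aemeasurable).mp this

open scoped MatrixOrder in
private lemma fmr_gauss_posdef {S : Matrix (Fin n) (Fin n) ℝ} (hS : S.PosDef) (c : Fin n → ℝ) :
    ∫ x : Fin n → ℝ, Real.exp (-(x ⬝ᵥ S.mulVec x) + c ⬝ᵥ x)
      = (Real.sqrt π)^n * (Real.sqrt S.det)⁻¹ * Real.exp ((c ⬝ᵥ (S⁻¹).mulVec c)/4) := by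
  classical
  set Q := CFC.sqrt S with hQdef
  have hQQ : Q * Q = S := CFC.sqrt_mul_sqrt_self S hS.posSemidef.nonneg
  have hQsymm : Qᵀ = Q := by
    have := (CFC.sqrt_nonneg S).posSemidef.1
    rwa [Matrix.IsHermitian, conjTranspose_eq_transpose_of_trivial] at this
  have hdetS : 0 < S.det := hS.det_pos
  have hdet2 : Q.det * Q.det = S.det := by rw [← Matrix.det_mul, hQQ]
  have hdet : Q.det ≠ 0 := by
    intro h; rw [h, mul_zero] at hdet2; exact hdetS.ne' hdet2.symm
  have habs : |Q.det| = Real.sqrt S.det := by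
    rw [← Real.sqrt_sq_eq_abs, sq, hdet2]
  have hQinv : Q * Q⁻¹ = 1 := Matrix.mul_nonsing_inv _ (Ne.isUnit hdet)
  have hSinv : S⁻¹ = Q⁻¹ * Q⁻¹ := by rw [← hQQ, Matrix.mul_inv_rev]
  have hQinvT : Q⁻¹ᵀ = Q⁻¹ := by rw [Matrix.transpose_nonsing_inv, hQsymm]
  have key : ∀ x : Fin n → ℝ,
      Real.exp (-((Q.mulVec x) ⬝ᵥ (Q.mulVec x)) + ((Q⁻¹).mulVec c) ⬝ᵥ (Q.mulVec x))
        = Real.exp (-(x ⬝ᵥ S.mulVec x) + c ⬝ᵥ x) := by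
    intro x
    congr 2
    · rw [Matrix.dotProduct_mulVec, ← Matrix.mulVec_transpose, hQsymm, Matrix.mulVec_mulVec,
        hQQ, dotProduct_comm, Matrix.dotProduct_mulVec, ← Matrix.mulVec_transpose]
    · rw [Matrix.dotProduct_mulVec, ← Matrix.mulVec_transpose, hQsymm, Matrix.mulVec_mulVec,
        hQinv, Matrix.one_mulVec]
  have hg : AEStronglyMeasurable
      (fun y : Fin n → ℝ => Real.exp (-(y ⬝ᵥ y) + ((Q⁻¹).mulVec c) ⬝ᵥ y)) volume :=
    (Real.continuous_exp.comp ((fmr_cont_self_dot.neg).add (fmr_cont_dot _))).aestronglyMeasurable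
  calc ∫ x : Fin n → ℝ, Real.exp (-(x ⬝ᵥ S.mulVec x) + c ⬝ᵥ x)
      = ∫ x : Fin n → ℝ,
          Real.exp (-((Q.mulVec x) ⬝ᵥ (Q.mulVec x)) + ((Q⁻¹).mulVec c) ⬝ᵥ (Q.mulVec x)) := by
        simp_rw [key]
    _ = |Q.det|⁻¹ * ∫ y : Fin n → ℝ, Real.exp (-(y ⬝ᵥ y) + ((Q⁻¹).mulVec c) ⬝ᵥ y) :=
        fmr_integral_comp_mulVec Q hdet _ hg
    _ = (Real.sqrt S.det)⁻¹ *
          ((Real.sqrt π)^n * Real.exp ((((Q⁻¹).mulVec c) ⬝ᵥ ((Q⁻¹).mulVec c))/4)) := by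
        rw [fmr_gauss_diag, habs]
    _ = (Real.sqrt π)^n * (Real.sqrt S.det)⁻¹ * Real.exp ((c ⬝ᵥ (S⁻¹).mulVec c)/4) := by
        have hdd : ((Q⁻¹).mulVec c) ⬝ᵥ ((Q⁻¹).mulVec c) = c ⬝ᵥ (S⁻¹).mulVec c := by
          rw [Matrix.dotProduct_mulVec, ← Matrix.mulVec_transpose, hQinvT,
            Matrix.mulVec_mulVec, ← hSinv, dotProduct_comm]
        rw [hdd]; ring

open scoped MatrixOrder in
private lemma fmr_gauss_posdef_integrable {S : Matrix (Fin n) (Fin n) ℝ} (hS : S.PosDef)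
    (c : Fin n → ℝ) :
    Integrable (fun x : Fin n → ℝ => Real.exp (-(x ⬝ᵥ S.mulVec x) + c ⬝ᵥ x)) := by
  classical
  set Q := CFC.sqrt S with hQdef
  have hQQ : Q * Q = S := CFC.sqrt_mul_sqrt_self S hS.posSemidef.nonneg
  have hQsymm : Qᵀ = Q := by
    have := (CFC.sqrt_nonneg S).posSemidef.1
    rwa [Matrix.IsHermitian, conjTranspose_eq_transpose_of_trivial] at this
  have hdetS : 0 < S.det := hS.det_pos
  have hdet2 : Q.det * Q.det = S.det := by rw [← Matrix.det_mul, hQQ]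
  have hdet : Q.det ≠ 0 := by
    intro h; rw [h, mul_zero] at hdet2; exact hdetS.ne' hdet2.symm
  have hQinv : Q * Q⁻¹ = 1 := Matrix.mul_nonsing_inv _ (Ne.isUnit hdet)
  have key : ∀ x : Fin n → ℝ,
      Real.exp (-((Q.mulVec x) ⬝ᵥ (Q.mulVec x)) + ((Q⁻¹).mulVec c) ⬝ᵥ (Q.mulVec x))
        = Real.exp (-(x ⬝ᵥ S.mulVec x) + c ⬝ᵥ x) := by
    intro x
    congr 2
    · rw [Matrix.dotProduct_mulVec, ← Matrix.mulVec_transpose, hQsymm, Matrix.mulVec_mulVec,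
        hQQ, dotProduct_comm, Matrix.dotProduct_mulVec, ← Matrix.mulVec_transpose]
    · rw [Matrix.dotProduct_mulVec, ← Matrix.mulVec_transpose, hQsymm, Matrix.mulVec_mulVec,
        hQinv, Matrix.one_mulVec]
  have := fmr_integrable_comp_mulVec hdet (fmr_gauss_diag_integrable ((Q⁻¹).mulVec c))
  simpa only [key] using this

private lemma fmr_abs_le_exp_add_exp (t : ℝ) : |t| ≤ Real.exp t + Real.exp (-t) := by
  have h1 : |t| ≤ Real.exp |t| := (le_add_of_nonneg_left zero_le_one).trans
    (by linarith [Real.add_one_le_exp |t|])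
  rcases abs_cases t with ⟨h, _⟩ | ⟨h, _⟩
  · rw [h] at h1 ⊢; exact h1.trans (le_add_of_nonneg_right (Real.exp_pos _).le)
  · rw [h] at h1 ⊢; exact h1.trans (le_add_of_nonneg_left (Real.exp_pos _).le)

private lemma fmr_moment_integrable {S : Matrix (Fin n) (Fin n) ℝ} (hS : S.PosDef)
    (c r : Fin n → ℝ) :
    Integrable (fun x : Fin n → ℝ => (r ⬝ᵥ x) * Real.exp (-(x ⬝ᵥ S.mulVec x) + c ⬝ᵥ x)) := by
  have hg : Integrable (fun x : Fin n → ℝ =>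
      Real.exp (-(x ⬝ᵥ S.mulVec x) + (c + r) ⬝ᵥ x) +
      Real.exp (-(x ⬝ᵥ S.mulVec x) + (c - r) ⬝ᵥ x)) :=
    (fmr_gauss_posdef_integrable hS (c + r)).add (fmr_gauss_posdef_integrable hS (c - r))
  have hm : AEStronglyMeasurable
      (fun x : Fin n → ℝ => (r ⬝ᵥ x) * Real.exp (-(x ⬝ᵥ S.mulVec x) + c ⬝ᵥ x)) volume :=
    ((fmr_cont_dot r).mul (Real.continuous_exp.comp
      (((fmr_cont_quad S).neg).add (fmr_cont_dot c)))).aestronglyMeasurable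
  refine hg.mono' hm (Filter.Eventually.of_forall (fun x => ?_))
  have h1 : |r ⬝ᵥ x| ≤ Real.exp (r ⬝ᵥ x) + Real.exp (-(r ⬝ᵥ x)) := fmr_abs_le_exp_add_exp _
  have he : (0:ℝ) < Real.exp (-(x ⬝ᵥ S.mulVec x) + c ⬝ᵥ x) := Real.exp_pos _
  rw [Real.norm_eq_abs, abs_mul, abs_of_pos he]
  calc |r ⬝ᵥ x| * Real.exp (-(x ⬝ᵥ S.mulVec x) + c ⬝ᵥ x)
      ≤ (Real.exp (r ⬝ᵥ x) + Real.exp (-(r ⬝ᵥ x))) * Real.exp (-(x ⬝ᵥ S.mulVec x) + c ⬝ᵥ x) :=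
        mul_le_mul_of_nonneg_right h1 he.le
    _ = Real.exp (-(x ⬝ᵥ S.mulVec x) + (c + r) ⬝ᵥ x) +
        Real.exp (-(x ⬝ᵥ S.mulVec x) + (c - r) ⬝ᵥ x) := by
        rw [add_mul, ← Real.exp_add, ← Real.exp_add, add_dotProduct,
          sub_dotProduct]
        ring_nf

private lemma fmr_odd_integral_zero (S : Matrix (Fin n) (Fin n) ℝ) (r : Fin n → ℝ) :
    ∫ y : Fin n → ℝ, (r ⬝ᵥ y) * Real.exp (-(y ⬝ᵥ S.mulVec y)) = 0 := by
  have hodd : ∀ y : Fin n → ℝ,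
      (r ⬝ᵥ (-y)) * Real.exp (-((-y) ⬝ᵥ S.mulVec (-y)))
        = -((r ⬝ᵥ y) * Real.exp (-(y ⬝ᵥ S.mulVec y))) := by
    intro y
    rw [Matrix.mulVec_neg, dotProduct_neg, neg_dotProduct, neg_neg,
      dotProduct_neg]
    ring
  have h := MeasureTheory.integral_neg_eq_self
    (fun y : Fin n → ℝ => (r ⬝ᵥ y) * Real.exp (-(y ⬝ᵥ S.mulVec y))) volume
  simp only [hodd] at h
  rw [integral_neg] at h
  linarith

private lemma fmr_gauss_moment {S : Matrix (Fin n) (Fin n) ℝ} (hS : S.PosDef) (c r : Fin n → ℝ) :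
    ∫ x : Fin n → ℝ, (r ⬝ᵥ x) * Real.exp (-(x ⬝ᵥ S.mulVec x) + c ⬝ᵥ x)
      = (Real.sqrt π)^n * (Real.sqrt S.det)⁻¹ * Real.exp ((c ⬝ᵥ (S⁻¹).mulVec c)/4)
          * ((r ⬝ᵥ (S⁻¹).mulVec c)/2) := by
  classical
  have hSsymm : Sᵀ = S := by
    have := hS.1; rwa [Matrix.IsHermitian, conjTranspose_eq_transpose_of_trivial] at this
  have hdet : IsUnit S.det := Ne.isUnit hS.det_pos.ne'
  set m : Fin n → ℝ := (2:ℝ)⁻¹ • ((S⁻¹).mulVec c) with hmdef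
  have hm : S.mulVec m = (2:ℝ)⁻¹ • c := by
    rw [hmdef, Matrix.mulVec_smul, Matrix.mulVec_mulVec, Matrix.mul_nonsing_inv _ hdet,
      Matrix.one_mulVec]
  have hsymmform : ∀ y z : Fin n → ℝ, z ⬝ᵥ S.mulVec y = y ⬝ᵥ S.mulVec z := by
    intro y z
    rw [Matrix.dotProduct_mulVec, ← Matrix.mulVec_transpose, hSsymm, dotProduct_comm]
  have hexp : ∀ y : Fin n → ℝ,
      -((y + m) ⬝ᵥ S.mulVec (y + m)) + c ⬝ᵥ (y + m)
        = -(y ⬝ᵥ S.mulVec y) + (c ⬝ᵥ (S⁻¹).mulVec c)/4 := by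
    intro y
    have e1 : (y + m) ⬝ᵥ S.mulVec (y + m)
        = y ⬝ᵥ S.mulVec y + 2 * (y ⬝ᵥ S.mulVec m) + m ⬝ᵥ S.mulVec m := by
      rw [Matrix.mulVec_add, add_dotProduct, dotProduct_add,
        dotProduct_add, hsymmform m y]
      ring
    have e2 : y ⬝ᵥ S.mulVec m = (c ⬝ᵥ y)/2 := by
      rw [hm, dotProduct_smul, dotProduct_comm]
      simp [smul_eq_mul]; ring
    have e3 : m ⬝ᵥ S.mulVec m = (c ⬝ᵥ (S⁻¹).mulVec c)/4 := by
      rw [hm, dotProduct_smul, hmdef, smul_dotProduct, dotProduct_comm]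
      simp [smul_eq_mul]; ring
    have e4 : c ⬝ᵥ (y + m) = c ⬝ᵥ y + (c ⬝ᵥ (S⁻¹).mulVec c)/2 := by
      rw [dotProduct_add, hmdef, dotProduct_smul]
      simp [smul_eq_mul]; ring
    rw [e1, e2, e3, e4]; ring
  have hrm : r ⬝ᵥ m = (r ⬝ᵥ (S⁻¹).mulVec c)/2 := by
    rw [hmdef, dotProduct_smul]; simp [smul_eq_mul]; ring
  calc ∫ x : Fin n → ℝ, (r ⬝ᵥ x) * Real.exp (-(x ⬝ᵥ S.mulVec x) + c ⬝ᵥ x)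
      = ∫ y : Fin n → ℝ,
          (r ⬝ᵥ (y + m)) * Real.exp (-((y + m) ⬝ᵥ S.mulVec (y + m)) + c ⬝ᵥ (y + m)) := by
        rw [integral_add_right_eq_self
          (fun x : Fin n → ℝ => (r ⬝ᵥ x) * Real.exp (-(x ⬝ᵥ S.mulVec x) + c ⬝ᵥ x)) m]
    _ = ∫ y : Fin n → ℝ, ((r ⬝ᵥ y) * Real.exp (-(y ⬝ᵥ S.mulVec y))
          + (r ⬝ᵥ m) * Real.exp (-(y ⬝ᵥ S.mulVec y))) * Real.exp ((c ⬝ᵥ (S⁻¹).mulVec c)/4) := by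
        congr 1 with y
        rw [hexp y, dotProduct_add, Real.exp_add]
        ring
    _ = ((∫ y : Fin n → ℝ, (r ⬝ᵥ y) * Real.exp (-(y ⬝ᵥ S.mulVec y)))
          + (r ⬝ᵥ m) * ∫ y : Fin n → ℝ, Real.exp (-(y ⬝ᵥ S.mulVec y)))
            * Real.exp ((c ⬝ᵥ (S⁻¹).mulVec c)/4) := by
        rw [integral_mul_const]
        congr 1
        have i1 : Integrable
            (fun y : Fin n → ℝ => (r ⬝ᵥ y) * Real.exp (-(y ⬝ᵥ S.mulVec y))) := by
          have := fmr_moment_integrable hS (0 : Fin n → ℝ) r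
          simpa using this
        have i2 : Integrable (fun y : Fin n → ℝ => Real.exp (-(y ⬝ᵥ S.mulVec y))) := by
          have := fmr_gauss_posdef_integrable hS (0 : Fin n → ℝ)
          simpa using this
        rw [integral_add i1 (i2.const_mul _), integral_const_mul]
    _ = ((Real.sqrt π)^n * (Real.sqrt S.det)⁻¹) * Real.exp ((c ⬝ᵥ (S⁻¹).mulVec c)/4)
          * ((r ⬝ᵥ (S⁻¹).mulVec c)/2) := by
        rw [fmr_odd_integral_zero S r, hrm]
        have := fmr_gauss_posdef hS (0 : Fin n → ℝ)
        simp only [zero_dotProduct, dotProduct_zero, add_zero, zero_div,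
          Real.exp_zero, mul_one] at this
        rw [this]; ring
    _ = (Real.sqrt π)^n * (Real.sqrt S.det)⁻¹ * Real.exp ((c ⬝ᵥ (S⁻¹).mulVec c)/4)
          * ((r ⬝ᵥ (S⁻¹).mulVec c)/2) := by ring

private lemma fmr_inv_one_add_eq_integral {q : ℝ} (hq : 0 ≤ q) :
    (1+q)⁻¹ = ∫ p in Set.Ioi (0:ℝ), Real.exp (-(p*(1+q))) := by
  have h1q : 0 < 1 + q := by linarith
  have := integral_comp_mul_right_Ioi (fun x => Real.exp (-x)) 0 h1q
  simp only [zero_mul] at this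
  rw [this, integral_exp_neg_Ioi_zero, smul_eq_mul, mul_one]

private lemma fmr_exp_integrableOn {q : ℝ} (hq : 0 ≤ q) :
    IntegrableOn (fun p => Real.exp (-(p*(1+q)))) (Set.Ioi (0:ℝ)) := by
  have h1q : (0:ℝ) < 1 + q := by linarith
  have := exp_neg_integrableOn_Ioi 0 h1q
  refine this.congr_fun (fun p _ => by ring_nf) measurableSet_Ioi

private lemma fmr_posdef_smul {M : Matrix (Fin n) (Fin n) ℝ} (hM : M.PosDef) {a : ℝ}
    (ha : 0 < a) : (a • M).PosDef := by
  refine Matrix.PosDef.of_dotProduct_mulVec_pos ?_ (fun x hx => ?_)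
  · have h1 := hM.1
    rw [Matrix.IsHermitian, conjTranspose_eq_transpose_of_trivial] at h1 ⊢
    rw [Matrix.transpose_smul, h1]
  · have h2 := hM.dotProduct_mulVec_pos hx
    rw [Matrix.smul_mulVec, dotProduct_smul, smul_eq_mul]
    exact mul_pos ha h2

end FMRaux

/-- First moment of the ratio for `x ~ N(μ, Σ)`:
`E[(e_kᵀRx)/(1 + xᵀRx)]
  = c ∫₀^∞ |S|^{−1/2} e^{−p₂} e^{bᵀS⁻¹b/4} (rᵀS⁻¹b)/2 dp₂`,
with `S = (1/2)Σ⁻¹ + p₂R`, `b = Σ⁻¹μ`, `c = 2^{−n/2}|Σ|^{−1/2}e^{−μᵀΣ⁻¹μ/2}`. -/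
theorem first_moment_ratio {n : ℕ} (μv : Fin n → ℝ)
    (Sig R : Matrix (Fin n) (Fin n) ℝ) (hSig : Sig.PosDef) (hR : R.PosDef)
    (hRsymm : Rᵀ = R) (k : Fin n)
    (b : Fin n → ℝ) (hb : b = (Sig⁻¹).mulVec μv)
    (r : Fin n → ℝ) (hr : r = fun i => R i k)
    (c : ℝ) (hc : c = (2 : ℝ) ^ (-(n : ℝ) / 2) * Sig.det ^ (-(1 : ℝ) / 2) *
      Real.exp (-(μv ⬝ᵥ (Sig⁻¹).mulVec μv) / 2)) :
    ∫ x : Fin n → ℝ,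
        (Pi.single k 1 ⬝ᵥ R.mulVec x) / (1 + x ⬝ᵥ R.mulVec x) *
          gaussDensity μv Sig x =
      c * ∫ p₂ in Set.Ioi (0 : ℝ),
        ((1 / 2 : ℝ) • Sig⁻¹ + p₂ • R).det ^ (-(1 : ℝ) / 2) * Real.exp (-p₂) *
          Real.exp ((b ⬝ᵥ (((1 / 2 : ℝ) • Sig⁻¹ + p₂ • R)⁻¹).mulVec b) / 4) *
          ((r ⬝ᵥ (((1 / 2 : ℝ) • Sig⁻¹ + p₂ • R)⁻¹).mulVec b) / 2) := by
  classical
  have hAinv : (Sig⁻¹).PosDef := hSig.inv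
  have hAsymm : (Sig⁻¹)ᵀ = Sig⁻¹ := by
    have := hAinv.1
    rwa [Matrix.IsHermitian, conjTranspose_eq_transpose_of_trivial] at this
  have hhalf : ((1/2 : ℝ) • Sig⁻¹).PosDef := fmr_posdef_smul hAinv (by norm_num)
  set A : Matrix (Fin n) (Fin n) ℝ := (1/2 : ℝ) • Sig⁻¹ with hA
  have hSpPD : ∀ p : ℝ, 0 < p → (A + p • R).PosDef := fun p hp =>
    hhalf.add_posSemidef (fmr_posdef_smul hR hp).posSemidef
  set G : (Fin n → ℝ) → ℝ := fun x => Real.exp (-(x ⬝ᵥ A.mulVec x) + b ⬝ᵥ x) with hG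
  set C0 : ℝ := (2 * Real.pi) ^ (-(n : ℝ) / 2) * Sig.det ^ (-(1 : ℝ) / 2) *
    Real.exp (-(μv ⬝ᵥ (Sig⁻¹).mulVec μv) / 2) with hC0
  have hGpos : ∀ x, 0 < G x := fun x => Real.exp_pos _
  have hQnn : ∀ x : Fin n → ℝ, 0 ≤ x ⬝ᵥ R.mulVec x := fun x => by
    simpa using hR.posSemidef.dotProduct_mulVec_nonneg x
  -- symmetry of Sig⁻¹ quadratic form
  have hsymmform : ∀ y z : Fin n → ℝ, z ⬝ᵥ (Sig⁻¹).mulVec y = y ⬝ᵥ (Sig⁻¹).mulVec z := by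
    intro y z
    rw [Matrix.dotProduct_mulVec, ← Matrix.mulVec_transpose, hAsymm, dotProduct_comm]
  -- gauss density expansion
  have hgaussEq : ∀ x, gaussDensity μv Sig x = C0 * G x := by
    intro x
    rw [gaussDensity, hC0, hG]
    have hquad : -((x - μv) ⬝ᵥ (Sig⁻¹).mulVec (x - μv)) / 2
        = -(μv ⬝ᵥ (Sig⁻¹).mulVec μv) / 2 + (-(x ⬝ᵥ A.mulVec x) + b ⬝ᵥ x) := by
      have e1 : (x - μv) ⬝ᵥ (Sig⁻¹).mulVec (x - μv)
          = x ⬝ᵥ (Sig⁻¹).mulVec x - 2 * (x ⬝ᵥ (Sig⁻¹).mulVec μv)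
            + μv ⬝ᵥ (Sig⁻¹).mulVec μv := by
        rw [Matrix.mulVec_sub, sub_dotProduct, dotProduct_sub,
          dotProduct_sub, hsymmform x μv]
        ring
      have e2 : x ⬝ᵥ A.mulVec x = (x ⬝ᵥ (Sig⁻¹).mulVec x) / 2 := by
        rw [hA, Matrix.smul_mulVec, dotProduct_smul, smul_eq_mul]; ring
      have e3 : b ⬝ᵥ x = x ⬝ᵥ (Sig⁻¹).mulVec μv := by
        rw [hb, dotProduct_comm]
      rw [e1, e2, e3]; ring
    rw [hquad, Real.exp_add]
    ring
  -- single entry dot product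
  have hrj : ∀ j, r j = R k j := by
    intro j
    rw [hr]
    show R j k = R k j
    rw [← Matrix.transpose_apply R k j, hRsymm]
  have hsingleEq : ∀ x : Fin n → ℝ, Pi.single k 1 ⬝ᵥ R.mulVec x = r ⬝ᵥ x := by
    intro x
    have h1 : Pi.single k 1 ⬝ᵥ R.mulVec x = (R.mulVec x) k := by
      simp [dotProduct, Pi.single_apply]
    rw [h1]
    show (fun j => R k j) ⬝ᵥ x = r ⬝ᵥ x
    congr 1
    funext j
    exact (hrj j).symm
  -- the inner exponential kernel
  set F : (Fin n → ℝ) → ℝ → ℝ :=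
    fun x p => (r ⬝ᵥ x) * Real.exp (-(p * (1 + x ⬝ᵥ R.mulVec x))) * G x with hF
  -- pointwise p-integral representation
  have hpt : ∀ x : Fin n → ℝ,
      (r ⬝ᵥ x) * (1 + x ⬝ᵥ R.mulVec x)⁻¹ * G x
        = ∫ p in Set.Ioi (0:ℝ), F x p := by
    intro x
    rw [hF]
    simp only []
    rw [integral_mul_const, integral_const_mul, ← fmr_inv_one_add_eq_integral (hQnn x)]
  -- joint measurability
  have hFmeas : AEStronglyMeasurable (fun z : (Fin n → ℝ) × ℝ => F z.1 z.2)
      ((volume : Measure (Fin n → ℝ)).prod ((volume : Measure ℝ).restrict (Set.Ioi 0))) := by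
    apply Continuous.aestronglyMeasurable
    rw [hF]
    refine (((fmr_cont_dot r).comp continuous_fst).mul ?_).mul ?_
    · exact Real.continuous_exp.comp
        ((continuous_snd.mul (continuous_const.add
          ((fmr_cont_quad R).comp continuous_fst))).neg)
    · exact (Real.continuous_exp.comp
        ((((fmr_cont_quad A).comp continuous_fst).neg).add
          ((fmr_cont_dot b).comp continuous_fst)))
  -- slice integrability in p
  have hslice : ∀ x : Fin n → ℝ,
      Integrable (fun p => F x p) ((volume : Measure ℝ).restrict (Set.Ioi 0)) := by
    intro x
    rw [hF]
    exact ((fmr_exp_integrableOn (hQnn x)).const_mul _).mul_const _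
  -- norm integral formula
  have hnormint : ∀ x : Fin n → ℝ,
      (∫ p in Set.Ioi (0:ℝ), ‖F x p‖)
        = |r ⬝ᵥ x| * (1 + x ⬝ᵥ R.mulVec x)⁻¹ * G x := by
    intro x
    have : (fun p => ‖F x p‖)
        = fun p => |r ⬝ᵥ x| * Real.exp (-(p * (1 + x ⬝ᵥ R.mulVec x))) * G x := by
      funext p
      rw [hF]
      simp only [Real.norm_eq_abs, abs_mul, abs_of_pos (Real.exp_pos _),
        abs_of_pos (hGpos x)]
    rw [this, integral_mul_const, integral_const_mul, ← fmr_inv_one_add_eq_integral (hQnn x)]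
  -- product integrability
  have hFint : Integrable (fun z : (Fin n → ℝ) × ℝ => F z.1 z.2)
      ((volume : Measure (Fin n → ℝ)).prod ((volume : Measure ℝ).restrict (Set.Ioi 0))) := by
    rw [MeasureTheory.integrable_prod_iff hFmeas]
    constructor
    · exact Filter.Eventually.of_forall hslice
    · have hmaj : Integrable (fun x : Fin n → ℝ => |r ⬝ᵥ x| * G x) := by
        have h0 := (fmr_moment_integrable hhalf b r).abs
        refine h0.congr (Filter.Eventually.of_forall (fun x => ?_))
        rw [hG]
        simp only [abs_mul, abs_of_pos (Real.exp_pos _)]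
      have hcont : Continuous (fun x : Fin n → ℝ =>
          |r ⬝ᵥ x| * (1 + x ⬝ᵥ R.mulVec x)⁻¹ * G x) := by
        refine (((fmr_cont_dot r).abs.mul ?_).mul ?_)
        · exact (continuous_const.add (fmr_cont_quad R)).inv₀
            (fun x => by have := hQnn x; show (1:ℝ) + x ⬝ᵥ R.mulVec x ≠ 0; positivity)
        · exact Real.continuous_exp.comp (((fmr_cont_quad A).neg).add (fmr_cont_dot b))
      refine hmaj.mono' ?_ (Filter.Eventually.of_forall (fun x => ?_))
      · refine AEStronglyMeasurable.congr hcont.aestronglyMeasurable ?_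
        exact Filter.Eventually.of_forall (fun x => (hnormint x).symm)
      · rw [Real.norm_eq_abs, hnormint x]
        have h1 : (1 + x ⬝ᵥ R.mulVec x)⁻¹ ≤ 1 := by
          rw [inv_le_one_iff₀]
          right; linarith [hQnn x]
        have h2 : (0:ℝ) ≤ |r ⬝ᵥ x| * (1 + x ⬝ᵥ R.mulVec x)⁻¹ * G x := by
          have := hQnn x
          have := (hGpos x).le
          positivity
        rw [abs_of_nonneg h2]
        calc |r ⬝ᵥ x| * (1 + x ⬝ᵥ R.mulVec x)⁻¹ * G x
            ≤ |r ⬝ᵥ x| * 1 * G x := by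
              apply mul_le_mul_of_nonneg_right _ (hGpos x).le
              exact mul_le_mul_of_nonneg_left h1 (abs_nonneg _)
          _ = |r ⬝ᵥ x| * G x := by ring
    -- inner x-integral for fixed p
  have hinner : ∀ p : ℝ, 0 < p →
      (∫ x : Fin n → ℝ, F x p)
        = Real.exp (-p) * ((Real.sqrt π)^n * (Real.sqrt (A + p • R).det)⁻¹ *
            Real.exp ((b ⬝ᵥ ((A + p • R)⁻¹).mulVec b)/4) *
            ((r ⬝ᵥ ((A + p • R)⁻¹).mulVec b)/2)) := by
    intro p hp
    have hker : ∀ x : Fin n → ℝ,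
        F x p = Real.exp (-p) *
          ((r ⬝ᵥ x) * Real.exp (-(x ⬝ᵥ (A + p • R).mulVec x) + b ⬝ᵥ x)) := by
      intro x
      rw [hF, hG]
      simp only []
      rw [mul_comm (Real.exp (-p)), mul_assoc, ← Real.exp_add, mul_assoc, ← Real.exp_add]
      congr 2
      have : x ⬝ᵥ (A + p • R).mulVec x
          = x ⬝ᵥ A.mulVec x + p * (x ⬝ᵥ R.mulVec x) := by
        rw [Matrix.add_mulVec, dotProduct_add, Matrix.smul_mulVec,
          dotProduct_smul, smul_eq_mul, Matrix.smul_mulVec, dotProduct_smul,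
          smul_eq_mul]
      rw [this]
      ring
    simp_rw [hker]
    rw [integral_const_mul, fmr_gauss_moment (hSpPD p hp) b r]
  -- assembling
  have hden : ∀ p : ℝ, 0 < p →
      ((A + p • R).det) ^ (-(1:ℝ)/2) = (Real.sqrt (A + p • R).det)⁻¹ := by
    intro p hp
    have hd : 0 < (A + p • R).det := (hSpPD p hp).det_pos
    rw [neg_div, Real.rpow_neg hd.le, Real.sqrt_eq_rpow]
  have hCc : C0 * (Real.sqrt π)^n = c := by
    have hsp : (Real.sqrt π)^n = π ^ ((n:ℝ)/2) := by
      rw [Real.sqrt_eq_rpow, ← Real.rpow_natCast (π ^ ((1:ℝ)/2)) n, ← Real.rpow_mul pi_pos.le]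
      congr 1
      ring
    have h2pi : (2 * π : ℝ) ^ (-(n:ℝ)/2)
        = 2 ^ (-(n:ℝ)/2) * π ^ (-(n:ℝ)/2) := Real.mul_rpow (by norm_num) pi_pos.le
    rw [hC0, hc, hsp, h2pi]
    have : π ^ (-(n:ℝ)/2) * π ^ ((n:ℝ)/2) = 1 := by
      rw [← Real.rpow_add pi_pos, neg_div, neg_add_cancel, Real.rpow_zero]
    calc 2 ^ (-(n:ℝ)/2) * π ^ (-(n:ℝ)/2) * Sig.det ^ (-(1:ℝ)/2) *
          Real.exp (-(μv ⬝ᵥ (Sig⁻¹).mulVec μv) / 2) * π ^ ((n:ℝ)/2)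
        = 2 ^ (-(n:ℝ)/2) * (π ^ (-(n:ℝ)/2) * π ^ ((n:ℝ)/2)) * Sig.det ^ (-(1:ℝ)/2) *
          Real.exp (-(μv ⬝ᵥ (Sig⁻¹).mulVec μv) / 2) := by ring
      _ = 2 ^ (-(n:ℝ)/2) * Sig.det ^ (-(1:ℝ)/2) *
          Real.exp (-(μv ⬝ᵥ (Sig⁻¹).mulVec μv) / 2) := by rw [this]; ring
  -- main calculation
  calc ∫ x : Fin n → ℝ,
        (Pi.single k 1 ⬝ᵥ R.mulVec x) / (1 + x ⬝ᵥ R.mulVec x) * gaussDensity μv Sig x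
      = ∫ x : Fin n → ℝ, C0 * ((r ⬝ᵥ x) * (1 + x ⬝ᵥ R.mulVec x)⁻¹ * G x) := by
        congr 1
        funext x
        rw [hsingleEq x, hgaussEq x, div_eq_mul_inv]
        ring
    _ = C0 * ∫ x : Fin n → ℝ, (r ⬝ᵥ x) * (1 + x ⬝ᵥ R.mulVec x)⁻¹ * G x :=
        integral_const_mul _ _
    _ = C0 * ∫ x : Fin n → ℝ, ∫ p in Set.Ioi (0:ℝ), F x p := by
        congr 1
        exact integral_congr_ae (Filter.Eventually.of_forall hpt)
    _ = C0 * ∫ p in Set.Ioi (0:ℝ), ∫ x : Fin n → ℝ, F x p := by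
        congr 1
        exact MeasureTheory.integral_integral_swap hFint
    _ = C0 * ∫ p in Set.Ioi (0:ℝ),
          Real.exp (-p) * ((Real.sqrt π)^n * (Real.sqrt (A + p • R).det)⁻¹ *
            Real.exp ((b ⬝ᵥ ((A + p • R)⁻¹).mulVec b)/4) *
            ((r ⬝ᵥ ((A + p • R)⁻¹).mulVec b)/2)) := by
        congr 1
        refine setIntegral_congr_fun measurableSet_Ioi (fun p hp => ?_)
        exact hinner p hp
    _ = c * ∫ p₂ in Set.Ioi (0 : ℝ),
          ((1 / 2 : ℝ) • Sig⁻¹ + p₂ • R).det ^ (-(1 : ℝ) / 2) * Real.exp (-p₂) *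
            Real.exp ((b ⬝ᵥ (((1 / 2 : ℝ) • Sig⁻¹ + p₂ • R)⁻¹).mulVec b) / 4) *
            ((r ⬝ᵥ (((1 / 2 : ℝ) • Sig⁻¹ + p₂ • R)⁻¹).mulVec b) / 2) := by
        have hfin : ∫ p in Set.Ioi (0:ℝ),
            Real.exp (-p) * ((Real.sqrt π)^n * (Real.sqrt (A + p • R).det)⁻¹ *
              Real.exp ((b ⬝ᵥ ((A + p • R)⁻¹).mulVec b)/4) *
              ((r ⬝ᵥ ((A + p • R)⁻¹).mulVec b)/2))
            = (Real.sqrt π)^n * ∫ p₂ in Set.Ioi (0:ℝ),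
                (A + p₂ • R).det ^ (-(1 : ℝ) / 2) * Real.exp (-p₂) *
                  Real.exp ((b ⬝ᵥ ((A + p₂ • R)⁻¹).mulVec b) / 4) *
                  ((r ⬝ᵥ ((A + p₂ • R)⁻¹).mulVec b) / 2) := by
          rw [← integral_const_mul]
          refine setIntegral_congr_fun measurableSet_Ioi (fun p hp => ?_)
          rw [hden p hp]
          ring
        rw [hfin, ← hCc]
        ring
end

section
/- Ratio entry formula for the pseudoinverse: let X ∈ ℝⁿˣᵐ have columns x₁,…,x_m, fix t, set V = Σ_{l≠t} x_l x_lᵀ, and assume V is invertible. Then XXᵀ is invertible and the (t,k) entry of X⁺ = Xᵀ(XXᵀ)⁻¹ equals (e_kᵀ V⁻¹ x_t)/(1 + x_tᵀ V⁻¹ x_t). -/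
open Matrix

/-- Ratio entry formula for the pseudoinverse: with
`V = Σ_{l≠t} x_l x_lᵀ` invertible, `XXᵀ` is invertible and
`(X⁺)_{tk} = (e_kᵀ V⁻¹ x_t)/(1 + x_tᵀ V⁻¹ x_t)` where `X⁺ = Xᵀ(XXᵀ)⁻¹`. -/
theorem pseudoinverse_entry_ratio {n m : ℕ} (X : Matrix (Fin n) (Fin m) ℝ)
    (t : Fin m) (k : Fin n)
    (V : Matrix (Fin n) (Fin n) ℝ)
    (hV : V = ∑ l ∈ Finset.univ \ {t}, vecMulVec (fun i => X i l) (fun i => X i l))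
    (hVinv : IsUnit V.det) :
    IsUnit (X * Xᵀ).det ∧
    (Xᵀ * (X * Xᵀ)⁻¹) t k =
      (Pi.single k 1 ⬝ᵥ (V⁻¹).mulVec (fun i => X i t)) /
        (1 + (fun i => X i t) ⬝ᵥ (V⁻¹).mulVec (fun i => X i t)) := by
  classical
  set u : Fin n → ℝ := fun i => X i t with hu
  -- V is positive semidefinite
  have hpsd : V.PosSemidef := by
    rw [hV]
    refine Finset.sum_induction _ _ (fun a b ha hb => ha.add hb) PosSemidef.zero ?_
    intro l _
    have := posSemidef_conjTranspose_mul_self (replicateRow Unit (fun i => X i l))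
    simpa [conjTranspose_replicateRow, vecMulVec_eq Unit] using this
  have hVT : Vᵀ = V := hpsd.1
  haveI : Invertible V := V.invertibleOfIsUnitDet hVinv
  have hVV : V * V⁻¹ = 1 := mul_nonsing_inv V hVinv
  set s : Fin n → ℝ := V⁻¹ *ᵥ u with hs
  set c : ℝ := u ⬝ᵥ s with hc
  -- c ≥ 0
  have hus : V *ᵥ s = u := by
    rw [hs, mulVec_mulVec, hVV, one_mulVec]
  have hc0 : 0 ≤ c := by
    have : c = s ⬝ᵥ (V *ᵥ s) := by rw [hus, hc, dotProduct_comm]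
    rw [this]
    have := hpsd.dotProduct_mulVec_nonneg s
    simpa using this
  set d : ℝ := 1 + c with hd
  have hd0 : d ≠ 0 := by positivity
  -- X * Xᵀ = V + col u * 1 * row u
  have hXX : X * Xᵀ = V + replicateCol Unit u * (1 : Matrix Unit Unit ℝ) * replicateRow Unit u := by
    rw [Matrix.mul_one, hV]
    ext i j
    simp only [mul_apply, transpose_apply, Matrix.add_apply, Finset.sum_apply,
      vecMulVec_apply, replicateCol_apply, replicateRow_apply, replicateRow_mul_replicateCol_apply]
    rw [Finset.sum_eq_sum_sdiff_singleton_add (Finset.mem_univ t)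
      (fun l => X i l * X j l)]
    rw [Matrix.sum_apply]
    simp [vecMulVec_apply, hu]
  haveI : Invertible (1 : Matrix Unit Unit ℝ) := invertibleOne
  -- the 1×1 middle matrix
  have hB : ⅟(1 : Matrix Unit Unit ℝ) + replicateRow Unit u * ⅟V * replicateCol Unit u
      = d • (1 : Matrix Unit Unit ℝ) := by
    rw [invOf_one, invOf_eq_nonsing_inv]
    ext i j
    have hij : i = j := Subsingleton.elim i j
    subst hij
    rw [Matrix.mul_assoc, ← replicateCol_mulVec]
    simp [hd, hc, hs, one_apply_eq]
  haveI hBinvb : Invertible (⅟(1 : Matrix Unit Unit ℝ) + replicateRow Unit u * ⅟V * replicateCol Unit u) := by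
    rw [hB]
    refine (d • (1 : Matrix Unit Unit ℝ)).invertibleOfIsUnitDet ?_
    rw [det_unique]
    simp [isUnit_iff_ne_zero, hd0]
  haveI hXXinv : Invertible (X * Xᵀ) := by
    rw [hXX]
    exact invertibleAddMulMul V (replicateCol Unit u) 1 (replicateRow Unit u)
  have h1 : IsUnit (X * Xᵀ).det := (isUnit_iff_isUnit_det _).1 (isUnit_of_invertible _)
  refine ⟨h1, ?_⟩
  -- compute invOf of the middle matrix
  have hBinv : ⅟(⅟(1 : Matrix Unit Unit ℝ) + replicateRow Unit u * ⅟V * replicateCol Unit u)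
      = d⁻¹ • (1 : Matrix Unit Unit ℝ) := by
    refine invOf_eq_right_inv ?_
    rw [hB, smul_mul_assoc, mul_smul_comm, Matrix.mul_one, smul_smul,
      mul_inv_cancel₀ hd0, one_smul]
  have hrowu : replicateRow Unit u * V⁻¹ = replicateRow Unit s := by
    rw [← replicateRow_vecMul]
    rw [← hVT, ← transpose_nonsing_inv, vecMul_transpose, hs]
  have hcolu : V⁻¹ * replicateCol Unit u = replicateCol Unit s := by rw [← replicateCol_mulVec, ← hs]
  -- explicit inverse of X * Xᵀ
  have hW : (X * Xᵀ)⁻¹ = V⁻¹ - d⁻¹ • vecMulVec s s := by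
    have key := add_mul_mul_invOf_mul_eq_one V (replicateCol Unit u) (1 : Matrix Unit Unit ℝ)
      (replicateRow Unit u)
    rw [← hXX] at key
    rw [inv_eq_right_inv key, hBinv, invOf_eq_nonsing_inv]
    congr 1
    rw [Matrix.mul_smul, Matrix.smul_mul, Matrix.smul_mul, Matrix.mul_one]
    congr 1
    rw [hcolu, Matrix.mul_assoc, hrowu, ← vecMulVec_eq Unit]
  rw [hW]
  have huV : ∑ j, u j * (V⁻¹) j k = s k := by
    have h2 : (u ᵥ* V⁻¹) = s := by
      rw [← hVT, ← transpose_nonsing_inv, vecMul_transpose, hs]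
    rw [← h2]
    rfl
  have hsum2 : ∑ j, u j * (s j * s k) = c * s k := by
    rw [hc, dotProduct, Finset.sum_mul]
    exact Finset.sum_congr rfl fun j _ => by ring
  have lhs : (Xᵀ * (V⁻¹ - d⁻¹ • vecMulVec s s)) t k = s k - d⁻¹ * (c * s k) := by
    simp only [mul_apply, Matrix.sub_apply, Matrix.smul_apply, smul_eq_mul, transpose_apply,
      vecMulVec_apply]
    calc ∑ j, X j t * ((V⁻¹) j k - d⁻¹ * (s j * s k))
        = ∑ j, (u j * (V⁻¹) j k - d⁻¹ * (u j * (s j * s k))) :=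
          Finset.sum_congr rfl fun j _ => by simp only [hu]; ring
      _ = s k - d⁻¹ * (c * s k) := by
          rw [Finset.sum_sub_distrib, huV, ← Finset.mul_sum, hsum2]
  rw [lhs]
  have hsingle : (Pi.single k 1 : Fin n → ℝ) ⬝ᵥ s = s k := by
    simp [dotProduct, Pi.single_apply]
  rw [hsingle, hd]
  field_simp
  ring
end
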